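/- arXiv:0806.0906 — 5 statements merged into one kernel-verified Lean document; each statement's English description precedes it below -/
import Mathlib

section
/- If a finite simple graph G is the disjoint union of two graphs H_1 and H_2, then the boolean ideal 𝔅(G) is order-isomorphic to the product poset 𝔅(H_1) × 𝔅(H_2), via the map sending the class of an injective word w on G to the pair consisting of the class of the subword of w formed by the letters lying in H_1 and the class of the subword formed by the letters lying in H_2. -/
/-- One commutation move: swap two consecutive letters that are non-adjacent in `G`. -/
def CommStep {V : Type*} (G : SimpleGraph V) (w w' : List V) : Prop :=
  ∃ (a b : V) (u v : List V),
    ¬ G.Adj a b ∧ w = u ++ a :: b :: v ∧ w' = u ++ b :: a :: v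

/-- Commutation equivalence of words: the equivalence relation generated by commutation moves. -/
def commSetoid {V : Type*} (G : SimpleGraph V) : Setoid (List V) :=
  ⟨Relation.EqvGen (CommStep G), Relation.EqvGen.is_equivalence _⟩

/-- `bWords G k` = number of commutation classes of injective words of length `k` on `G`. -/
noncomputable def bWords {V : Type*} (G : SimpleGraph V) (k : ℕ) : ℕ :=
  Nat.card (Quotient (Setoid.comap
    (fun w : {w : List V // w.Nodup ∧ w.length = k} => w.1) (commSetoid G)))

/-- The boolean number `β(G) = (-1)^{|V|} ∑_{k=0}^{|V|} (-1)^k b_k(G)`. -/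
noncomputable def booleanNumber {V : Type*} (G : SimpleGraph V) [Fintype V] : ℤ :=
  (-1) ^ (Fintype.card V) *
    ∑ k ∈ Finset.range (Fintype.card V + 1), (-1) ^ k * (bWords G k : ℤ)
/-- The setoid of injective words (lists of pairwise distinct vertices) on `G`,
up to commutation equivalence. -/
def wordSetoid {V : Type*} (G : SimpleGraph V) : Setoid {w : List V // w.Nodup} :=
  Setoid.comap Subtype.val (commSetoid G)

/-- The boolean ideal of `G`: commutation classes of injective words on `G`. -/
def BIdeal {V : Type*} (G : SimpleGraph V) := Quotient (wordSetoid G)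

/-- The commutation class of an injective word. -/
def mkClass {V : Type*} (G : SimpleGraph V) (w : {w : List V // w.Nodup}) : BIdeal G :=
  Quotient.mk (wordSetoid G) w

/-- The subword order on the boolean ideal: `σ ≤ τ` iff some representative of `σ`
is a subsequence of some representative of `τ`. -/
def bLE {V : Type*} (G : SimpleGraph V) (σ τ : BIdeal G) : Prop :=
  ∃ a b : {w : List V // w.Nodup}, mkClass G a = σ ∧ mkClass G b = τ ∧ a.1.Sublist b.1

/-- The disjoint union of two simple graphs. -/
def disjUnionGraph {V₁ V₂ : Type*} (H₁ : SimpleGraph V₁) (H₂ : SimpleGraph V₂) :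
    SimpleGraph (V₁ ⊕ V₂) where
  Adj a b :=
    match a, b with
    | Sum.inl x, Sum.inl y => H₁.Adj x y
    | Sum.inr x, Sum.inr y => H₂.Adj x y
    | _, _ => False
  symm := ⟨by
    rintro (x | x) (y | y) h
    · exact H₁.adj_symm h
    · exact h
    · exact h
    · exact H₂.adj_symm h⟩
  loopless := ⟨by
    rintro (x | x) h
    · exact H₁.loopless.irrefl x h
    · exact H₂.loopless.irrefl x h⟩

/-- The subword of an injective word on `V₁ ⊕ V₂` formed by the letters lying in `V₁`. -/
def projLeft {V₁ V₂ : Type*} (w : {w : List (V₁ ⊕ V₂) // w.Nodup}) :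
    {u : List V₁ // u.Nodup} :=
  ⟨w.1.filterMap Sum.getLeft?,
    w.2.filterMap (by rintro (a | a) (b | b) c h1 h2 <;> simp_all)⟩

/-- The subword of an injective word on `V₁ ⊕ V₂` formed by the letters lying in `V₂`. -/
def projRight {V₁ V₂ : Type*} (w : {w : List (V₁ ⊕ V₂) // w.Nodup}) :
    {u : List V₂ // u.Nodup} :=
  ⟨w.1.filterMap Sum.getRight?,
    w.2.filterMap (by rintro (a | a) (b | b) c h1 h2 <;> simp_all)⟩

section Aux
variable {V V₁ V₂ : Type*} {G : SimpleGraph V} {H₁ : SimpleGraph V₁} {H₂ : SimpleGraph V₂}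

lemma commStep_append (p s : List V) {w w' : List V} (h : CommStep G w w') :
    CommStep G (p ++ w ++ s) (p ++ w' ++ s) := by
  obtain ⟨a, b, u, v, hab, rfl, rfl⟩ := h
  exact ⟨a, b, p ++ u, v ++ s, hab, by simp, by simp⟩

lemma eqvGen_append (p s : List V) {w w' : List V}
    (h : Relation.EqvGen (CommStep G) w w') :
    Relation.EqvGen (CommStep G) (p ++ w ++ s) (p ++ w' ++ s) := by
  induction h with
  | rel x y h => exact .rel _ _ (commStep_append p s h)
  | refl x => exact .refl _
  | symm x y _ ih => exact .symm _ _ ih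
  | trans x y z _ _ ih1 ih2 => exact .trans _ _ _ ih1 ih2

lemma eqvGen_move (c : V) (L s : List V) (h : ∀ x ∈ L, ¬ G.Adj c x) :
    Relation.EqvGen (CommStep G) (c :: (L ++ s)) (L ++ c :: s) := by
  induction L with
  | nil => exact .refl _
  | cons x t ih =>
    refine .trans _ _ _ (.rel _ _ ⟨c, x, [], t ++ s, h x (by simp), rfl, rfl⟩) ?_
    have := eqvGen_append [x] ([] : List V) (ih (fun y hy => h y (by simp [hy])))
    simpa using this

lemma notAdj_inl_inr (x : V₁) (y : V₂) : ¬ (disjUnionGraph H₁ H₂).Adj (Sum.inl x) (Sum.inr y) :=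
  fun h => h

lemma notAdj_inr_inl (y : V₂) (x : V₁) : ¬ (disjUnionGraph H₁ H₂).Adj (Sum.inr y) (Sum.inl x) :=
  fun h => h

lemma canonicalForm (w : List (V₁ ⊕ V₂)) :
    Relation.EqvGen (CommStep (disjUnionGraph H₁ H₂)) w
      ((w.filterMap Sum.getLeft?).map Sum.inl ++ (w.filterMap Sum.getRight?).map Sum.inr) := by
  induction w with
  | nil => exact .refl _
  | cons a t ih =>
    have step1 : Relation.EqvGen (CommStep (disjUnionGraph H₁ H₂)) (a :: t)
        (a :: ((t.filterMap Sum.getLeft?).map Sum.inl ++ (t.filterMap Sum.getRight?).map Sum.inr)) := by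
      simpa using eqvGen_append [a] ([] : List (V₁ ⊕ V₂)) ih
    refine .trans _ _ _ step1 ?_
    match a with
    | Sum.inl x =>
      simp only [List.filterMap_cons, Sum.getLeft?, Sum.getRight?]
      exact .refl _
    | Sum.inr y =>
      simp only [List.filterMap_cons, Sum.getLeft?, Sum.getRight?]
      refine eqvGen_move _ _ _ ?_
      rintro z hz
      simp only [List.mem_map] at hz
      obtain ⟨x, -, rfl⟩ := hz
      exact notAdj_inr_inl y x

lemma eqvGen_map_inl {u u' : List V₁} (h : Relation.EqvGen (CommStep H₁) u u') :
    Relation.EqvGen (CommStep (disjUnionGraph H₁ H₂)) (u.map Sum.inl) (u'.map Sum.inl) := by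
  induction h with
  | rel x y h =>
    obtain ⟨a, b, p, q, hab, rfl, rfl⟩ := h
    exact .rel _ _ ⟨Sum.inl a, Sum.inl b, p.map Sum.inl, q.map Sum.inl, hab, by simp, by simp⟩
  | refl x => exact .refl _
  | symm x y _ ih => exact .symm _ _ ih
  | trans x y z _ _ ih1 ih2 => exact .trans _ _ _ ih1 ih2

lemma eqvGen_map_inr {u u' : List V₂} (h : Relation.EqvGen (CommStep H₂) u u') :
    Relation.EqvGen (CommStep (disjUnionGraph H₁ H₂)) (u.map Sum.inr) (u'.map Sum.inr) := by
  induction h with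
  | rel x y h =>
    obtain ⟨a, b, p, q, hab, rfl, rfl⟩ := h
    exact .rel _ _ ⟨Sum.inr a, Sum.inr b, p.map Sum.inr, q.map Sum.inr, hab, by simp, by simp⟩
  | refl x => exact .refl _
  | symm x y _ ih => exact .symm _ _ ih
  | trans x y z _ _ ih1 ih2 => exact .trans _ _ _ ih1 ih2

lemma commStep_projLeft {w w' : List (V₁ ⊕ V₂)}
    (h : CommStep (disjUnionGraph H₁ H₂) w w') :
    Relation.EqvGen (CommStep H₁) (w.filterMap Sum.getLeft?) (w'.filterMap Sum.getLeft?) := by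
  obtain ⟨a, b, u, v, hab, rfl, rfl⟩ := h
  match a, b with
  | Sum.inl x, Sum.inl y =>
    refine .rel _ _ ⟨x, y, u.filterMap Sum.getLeft?, v.filterMap Sum.getLeft?, hab, ?_, ?_⟩ <;> simp
  | Sum.inl x, Sum.inr y => simp; exact .refl _
  | Sum.inr x, Sum.inl y => simp; exact .refl _
  | Sum.inr x, Sum.inr y => simp; exact .refl _

lemma commStep_projRight {w w' : List (V₁ ⊕ V₂)}
    (h : CommStep (disjUnionGraph H₁ H₂) w w') :
    Relation.EqvGen (CommStep H₂) (w.filterMap Sum.getRight?) (w'.filterMap Sum.getRight?) := by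
  obtain ⟨a, b, u, v, hab, rfl, rfl⟩ := h
  match a, b with
  | Sum.inr x, Sum.inr y =>
    refine .rel _ _ ⟨x, y, u.filterMap Sum.getRight?, v.filterMap Sum.getRight?, hab, ?_, ?_⟩ <;> simp
  | Sum.inl x, Sum.inr y => simp; exact .refl _
  | Sum.inr x, Sum.inl y => simp; exact .refl _
  | Sum.inl x, Sum.inl y => simp; exact .refl _

lemma eqvGen_projLeft {w w' : List (V₁ ⊕ V₂)}
    (h : Relation.EqvGen (CommStep (disjUnionGraph H₁ H₂)) w w') :
    Relation.EqvGen (CommStep H₁) (w.filterMap Sum.getLeft?) (w'.filterMap Sum.getLeft?) := by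
  induction h with
  | rel x y h => exact commStep_projLeft h
  | refl x => exact .refl _
  | symm x y _ ih => exact .symm _ _ ih
  | trans x y z _ _ ih1 ih2 => exact .trans _ _ _ ih1 ih2

lemma eqvGen_projRight {w w' : List (V₁ ⊕ V₂)}
    (h : Relation.EqvGen (CommStep (disjUnionGraph H₁ H₂)) w w') :
    Relation.EqvGen (CommStep H₂) (w.filterMap Sum.getRight?) (w'.filterMap Sum.getRight?) := by
  induction h with
  | rel x y h => exact commStep_projRight h
  | refl x => exact .refl _
  | symm x y _ ih => exact .symm _ _ ih
  | trans x y z _ _ ih1 ih2 => exact .trans _ _ _ ih1 ih2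

lemma nodup_canon {u : List V₁} {v : List V₂} (hu : u.Nodup) (hv : v.Nodup) :
    (u.map Sum.inl ++ v.map (Sum.inr : V₂ → V₁ ⊕ V₂)).Nodup := by
  refine List.Nodup.append (hu.map Sum.inl_injective) (hv.map Sum.inr_injective) ?_
  intro z hz hz'
  simp only [List.mem_map] at hz hz'
  obtain ⟨x, -, rfl⟩ := hz
  obtain ⟨y, -, h⟩ := hz'
  exact Sum.inl_ne_inr h.symm

lemma projLeft_canon (u : List V₁) (v : List V₂) :
    (u.map Sum.inl ++ v.map (Sum.inr : V₂ → V₁ ⊕ V₂)).filterMap Sum.getLeft? = u := by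
  simp [List.filterMap_append, List.filterMap_map, Function.comp_def]

lemma projRight_canon (u : List V₁) (v : List V₂) :
    (u.map Sum.inl ++ v.map (Sum.inr : V₂ → V₁ ⊕ V₂)).filterMap Sum.getRight? = v := by
  simp [List.filterMap_append, List.filterMap_map, Function.comp_def]

lemma eqvGen_append_right (s : List V) {w w' : List V}
    (h : Relation.EqvGen (CommStep G) w w') :
    Relation.EqvGen (CommStep G) (w ++ s) (w' ++ s) := by
  simpa using eqvGen_append [] s h

lemma eqvGen_append_left (p : List V) {w w' : List V}
    (h : Relation.EqvGen (CommStep G) w w') :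
    Relation.EqvGen (CommStep G) (p ++ w) (p ++ w') := by
  simpa using eqvGen_append p [] h

end Aux

/-- **The boolean ideal of a disjoint union is the product of the boolean ideals:**
if `G = H₁ ⊔ H₂`, the map sending the class of a word `w` to the pair of classes of its
subwords with letters in `H₁` resp. `H₂` is an order isomorphism
`𝔅(G) ≅ 𝔅(H₁) × 𝔅(H₂)` (the target carrying the componentwise order). -/
theorem bIdeal_disjUnion_orderIso {V₁ V₂ : Type*}
    (H₁ : SimpleGraph V₁) (H₂ : SimpleGraph V₂) :
    ∃ φ : BIdeal (disjUnionGraph H₁ H₂) ≃ BIdeal H₁ × BIdeal H₂,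
      (∀ w : {w : List (V₁ ⊕ V₂) // w.Nodup},
        φ (mkClass (disjUnionGraph H₁ H₂) w) =
          (mkClass H₁ (projLeft w), mkClass H₂ (projRight w))) ∧
      (∀ a b : BIdeal (disjUnionGraph H₁ H₂),
        bLE (disjUnionGraph H₁ H₂) a b ↔
          bLE H₁ (φ a).1 (φ b).1 ∧ bLE H₂ (φ a).2 (φ b).2) := by
  set G := disjUnionGraph H₁ H₂ with hG
  have hresp : ∀ a b : {w : List (V₁ ⊕ V₂) // w.Nodup}, wordSetoid G a b →
      (mkClass H₁ (projLeft a), mkClass H₂ (projRight a)) =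
        (mkClass H₁ (projLeft b), mkClass H₂ (projRight b)) := by
    intro a b h
    have h' : Relation.EqvGen (CommStep G) a.1 b.1 := h
    refine Prod.ext ?_ ?_
    · exact Quotient.sound (eqvGen_projLeft h')
    · exact Quotient.sound (eqvGen_projRight h')
  let F : BIdeal G → BIdeal H₁ × BIdeal H₂ :=
    Quotient.lift (fun w => (mkClass H₁ (projLeft w), mkClass H₂ (projRight w))) hresp
  let Jfun : {u : List V₁ // u.Nodup} → {v : List V₂ // v.Nodup} → BIdeal G :=
    fun u v => mkClass G ⟨u.1.map Sum.inl ++ v.1.map Sum.inr, nodup_canon u.2 v.2⟩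
  have hJ : ∀ (u₁ : {u : List V₁ // u.Nodup}) (v₁ : {v : List V₂ // v.Nodup})
      (u₂ : {u : List V₁ // u.Nodup}) (v₂ : {v : List V₂ // v.Nodup}),
      wordSetoid H₁ u₁ u₂ → wordSetoid H₂ v₁ v₂ → Jfun u₁ v₁ = Jfun u₂ v₂ := by
    intro u₁ v₁ u₂ v₂ h1 h2
    have h1' : Relation.EqvGen (CommStep H₁) u₁.1 u₂.1 := h1
    have h2' : Relation.EqvGen (CommStep H₂) v₁.1 v₂.1 := h2
    refine Quotient.sound ?_
    show Relation.EqvGen (CommStep G)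
      (u₁.1.map Sum.inl ++ v₁.1.map Sum.inr) (u₂.1.map Sum.inl ++ v₂.1.map Sum.inr)
    exact .trans _ _ _
      (eqvGen_append_right _ (eqvGen_map_inl h1'))
      (eqvGen_append_left _ (eqvGen_map_inr h2'))
  let J : BIdeal H₁ × BIdeal H₂ → BIdeal G :=
    fun p => Quotient.lift₂ Jfun hJ p.1 p.2
  have hFJ : ∀ p, F (J p) = p := by
    rintro ⟨pu, pv⟩
    induction pu using Quotient.ind with | _ u =>
    induction pv using Quotient.ind with | _ v =>
    show (mkClass H₁ (projLeft ⟨u.1.map Sum.inl ++ v.1.map Sum.inr, _⟩),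
          mkClass H₂ (projRight ⟨u.1.map Sum.inl ++ v.1.map Sum.inr, _⟩)) = _
    have h1 : projLeft (V₂ := V₂) ⟨u.1.map Sum.inl ++ v.1.map Sum.inr, nodup_canon u.2 v.2⟩ = u :=
      Subtype.ext (projLeft_canon u.1 v.1)
    have h2 : projRight (V₁ := V₁) ⟨u.1.map Sum.inl ++ v.1.map Sum.inr, nodup_canon u.2 v.2⟩ = v :=
      Subtype.ext (projRight_canon u.1 v.1)
    rw [h1, h2]
    rfl
  have hJF : ∀ x, J (F x) = x := by
    intro x
    induction x using Quotient.ind with | _ w =>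
    show mkClass G ⟨(w.1.filterMap Sum.getLeft?).map Sum.inl ++
        (w.1.filterMap Sum.getRight?).map Sum.inr, _⟩ = mkClass G w
    exact Quotient.sound (Relation.EqvGen.symm _ _ (canonicalForm w.1))
  refine ⟨⟨F, J, hJF, hFJ⟩, fun w => rfl, ?_⟩
  intro a b
  constructor
  · rintro ⟨x, y, rfl, rfl, hsub⟩
    constructor
    · exact ⟨projLeft x, projLeft y, rfl, rfl, hsub.filterMap Sum.getLeft?⟩
    · exact ⟨projRight x, projRight y, rfl, rfl, hsub.filterMap Sum.getRight?⟩
  · rintro ⟨⟨u₁, u₂, hu1, hu2, hsubL⟩, ⟨v₁, v₂, hv1, hv2, hsubR⟩⟩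
    refine ⟨⟨u₁.1.map Sum.inl ++ v₁.1.map Sum.inr, nodup_canon u₁.2 v₁.2⟩,
        ⟨u₂.1.map Sum.inl ++ v₂.1.map Sum.inr, nodup_canon u₂.2 v₂.2⟩, ?_, ?_,
        (hsubL.map Sum.inl).append (hsubR.map Sum.inr)⟩
    · have : F (mkClass G ⟨u₁.1.map Sum.inl ++ v₁.1.map Sum.inr, nodup_canon u₁.2 v₁.2⟩) = F a := by
        show (mkClass H₁ (projLeft _), mkClass H₂ (projRight _)) = F a
        have e1 : projLeft (V₂ := V₂) ⟨u₁.1.map Sum.inl ++ v₁.1.map Sum.inr,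
            nodup_canon u₁.2 v₁.2⟩ = u₁ := Subtype.ext (projLeft_canon u₁.1 v₁.1)
        have e2 : projRight (V₁ := V₁) ⟨u₁.1.map Sum.inl ++ v₁.1.map Sum.inr,
            nodup_canon u₁.2 v₁.2⟩ = v₁ := Subtype.ext (projRight_canon u₁.1 v₁.1)
        rw [e1, e2]
        exact Prod.ext hu1 hv1
      have hinj : Function.Injective F := Function.LeftInverse.injective hJF
      exact hinj this
    · have : F (mkClass G ⟨u₂.1.map Sum.inl ++ v₂.1.map Sum.inr, nodup_canon u₂.2 v₂.2⟩) = F b := by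
        show (mkClass H₁ (projLeft _), mkClass H₂ (projRight _)) = F b
        have e1 : projLeft (V₂ := V₂) ⟨u₂.1.map Sum.inl ++ v₂.1.map Sum.inr,
            nodup_canon u₂.2 v₂.2⟩ = u₂ := Subtype.ext (projLeft_canon u₂.1 v₂.1)
        have e2 : projRight (V₁ := V₁) ⟨u₂.1.map Sum.inl ++ v₂.1.map Sum.inr,
            nodup_canon u₂.2 v₂.2⟩ = v₂ := Subtype.ext (projRight_canon u₂.1 v₂.1)
        rw [e1, e2]
        exact Prod.ext hu2 hv2
      have hinj : Function.Injective F := Function.LeftInverse.injective hJF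
      exact hinj this
end

section
/- Let G be a finite simple graph with at least two vertices, let ℓ be a vertex of G of degree 1, and let v be the unique neighbor of ℓ. Then β(G) = β(G ∖ ℓ) + β(G ∖ {ℓ, v}), where G ∖ X denotes the induced subgraph on the complement of X and the empty graph is assigned β(∅) = 1 (which is automatic from the definition of β). -/
namespace LeafRec
open Relation List

section Basic
variable {V : Type*} {G : SimpleGraph V}

theorem commStep_perm {w w' : List V} (h : CommStep G w w') : w.Perm w' := by
  obtain ⟨a, b, u, t, _, rfl, rfl⟩ := h
  exact (List.Perm.append_left u (List.Perm.swap b a t))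

theorem eqv_perm {w w' : List V} (h : Relation.EqvGen (CommStep G) w w') : w.Perm w' := by
  induction h with
  | rel _ _ h => exact commStep_perm h
  | refl => exact List.Perm.refl _
  | symm _ _ _ ih => exact ih.symm
  | trans _ _ _ _ _ ih₁ ih₂ => exact ih₁.trans ih₂

theorem commStep_append_left {w w' : List V} (x : List V) (h : CommStep G w w') :
    CommStep G (x ++ w) (x ++ w') := by
  obtain ⟨a, b, u, t, hab, rfl, rfl⟩ := h
  exact ⟨a, b, x ++ u, t, hab, by simp, by simp⟩

theorem commStep_append_right {w w' : List V} (x : List V) (h : CommStep G w w') :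
    CommStep G (w ++ x) (w' ++ x) := by
  obtain ⟨a, b, u, t, hab, rfl, rfl⟩ := h
  exact ⟨a, b, u, t ++ x, hab, by simp, by simp⟩

theorem eqv_append_left {w w' : List V} (x : List V)
    (h : Relation.EqvGen (CommStep G) w w') :
    Relation.EqvGen (CommStep G) (x ++ w) (x ++ w') := by
  induction h with
  | rel _ _ h => exact EqvGen.rel _ _ (commStep_append_left x h)
  | refl => exact EqvGen.refl _
  | symm _ _ _ ih => exact ih.symm _ _
  | trans _ _ _ _ _ ih₁ ih₂ => exact ih₁.trans _ _ _ ih₂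

theorem eqv_append_right {w w' : List V} (x : List V)
    (h : Relation.EqvGen (CommStep G) w w') :
    Relation.EqvGen (CommStep G) (w ++ x) (w' ++ x) := by
  induction h with
  | rel _ _ h => exact EqvGen.rel _ _ (commStep_append_right x h)
  | refl => exact EqvGen.refl _
  | symm _ _ _ ih => exact ih.symm _ _
  | trans _ _ _ _ _ ih₁ ih₂ => exact ih₁.trans _ _ _ ih₂

theorem eqv_cons {w w' : List V} (a : V)
    (h : Relation.EqvGen (CommStep G) w w') :
    Relation.EqvGen (CommStep G) (a :: w) (a :: w') :=
  eqv_append_left [a] h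

theorem commStep_filter_eq (p : V → Bool)
    (hp : ∀ a b : V, ¬ G.Adj a b → p a → p b → a = b)
    {w w' : List V} (h : CommStep G w w') : w.filter p = w'.filter p := by
  obtain ⟨a, b, u, t, hab, rfl, rfl⟩ := h
  simp only [List.filter_append, List.filter_cons]
  by_cases ha : p a <;> by_cases hb : p b <;> simp [ha, hb]
  have := hp a b hab ha hb; exact ⟨this, this.symm⟩

theorem eqv_filter_eq (p : V → Bool)
    (hp : ∀ a b : V, ¬ G.Adj a b → p a → p b → a = b)
    {w w' : List V} (h : Relation.EqvGen (CommStep G) w w') :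
    w.filter p = w'.filter p := by
  induction h with
  | rel _ _ h => exact commStep_filter_eq p hp h
  | refl => rfl
  | symm _ _ _ ih => exact ih.symm
  | trans _ _ _ _ _ ih₁ ih₂ => exact ih₁.trans ih₂

theorem eqv_bubble_front (x : V) :
    ∀ (u : List V), (∀ y ∈ u, ¬ G.Adj y x) → ∀ (t : List V),
      Relation.EqvGen (CommStep G) (u ++ x :: t) (x :: (u ++ t))
  | [], _, t => EqvGen.refl _
  | y :: u, h, t => by
    have h1 : Relation.EqvGen (CommStep G) (y :: (u ++ x :: t)) (y :: (x :: (u ++ t))) :=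
      eqv_cons y (eqv_bubble_front x u (fun z hz => h z (List.mem_cons_of_mem _ hz)) t)
    have h2 : CommStep G (y :: x :: (u ++ t)) (x :: y :: (u ++ t)) :=
      ⟨y, x, [], u ++ t, h y ((List.mem_cons_self (a := y) (l := u))), rfl, rfl⟩
    exact (h1.trans _ _ _ (EqvGen.rel _ _ h2))

theorem eqv_bubble_back (x : V) :
    ∀ (t : List V), (∀ y ∈ t, ¬ G.Adj x y) → ∀ (u : List V),
      Relation.EqvGen (CommStep G) (u ++ x :: t) ((u ++ t) ++ [x])
  | [], _, u => by simp; exact EqvGen.refl _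
  | y :: t, h, u => by
    have h2 : CommStep G (u ++ x :: y :: t) (u ++ y :: x :: t) :=
      ⟨x, y, u, t, h y ((List.mem_cons_self (a := y) (l := t))), rfl, rfl⟩
    have h1 : Relation.EqvGen (CommStep G) ((u ++ [y]) ++ x :: t) (((u ++ [y]) ++ t) ++ [x]) :=
      eqv_bubble_back x t (fun z hz => h z (List.mem_cons_of_mem _ hz)) (u ++ [y])
    have e1 : (u ++ [y]) ++ x :: t = u ++ y :: x :: t := by simp
    have e2 : ((u ++ [y]) ++ t) ++ [x] = (u ++ y :: t) ++ [x] := by simp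
    rw [e1, e2] at h1
    exact (EqvGen.rel _ _ h2).trans _ _ _ h1

variable [DecidableEq V]

theorem commStep_erase (x : V) {w w' : List V} (hw : w.Nodup) (h : CommStep G w w') :
    w.erase x = w'.erase x ∨ CommStep G (w.erase x) (w'.erase x) := by
  obtain ⟨a, b, u, t, hab, rfl, rfl⟩ := h
  by_cases hxu : x ∈ u
  · right
    rw [List.erase_append_left _ hxu, List.erase_append_left _ hxu]
    exact ⟨a, b, u.erase x, t, hab, rfl, rfl⟩
  · rw [List.erase_append_right _ hxu, List.erase_append_right _ hxu]
    have hne : a ≠ b := by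
      have := (List.nodup_append'.mp hw).2.1
      simp only [List.nodup_cons] at this
      intro he; exact this.1 (he ▸ (List.mem_cons_self (a := b) (l := t)))
    by_cases hax : a = x
    · left
      subst hax
      rw [List.erase_cons_head]
      rw [List.erase_cons_tail, List.erase_cons_head]
      simp [hne.symm]
    · by_cases hbx : b = x
      · left
        subst hbx
        rw [List.erase_cons_tail, List.erase_cons_head, List.erase_cons_head]
        simp [hax]
      · right
        rw [List.erase_cons_tail, List.erase_cons_tail, List.erase_cons_tail,
          List.erase_cons_tail]
        · exact ⟨a, b, u, t.erase x, hab, rfl, rfl⟩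
        all_goals simp [hax, hbx]

theorem eqv_erase (x : V) {w w' : List V} (h : Relation.EqvGen (CommStep G) w w') :
    w.Nodup → Relation.EqvGen (CommStep G) (w.erase x) (w'.erase x) := by
  induction h with
  | rel a b h =>
    intro hw
    rcases commStep_erase x hw h with he | hs
    · rw [he]; exact EqvGen.refl _
    · exact EqvGen.rel _ _ hs
  | refl a => intro _; exact EqvGen.refl _
  | symm a b h ih =>
    intro hb
    have ha : a.Nodup := (eqv_perm h).nodup_iff.mpr hb
    exact (ih ha).symm _ _
  | trans a b c hab hbc ih₁ ih₂ =>
    intro ha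
    have hb : b.Nodup := (eqv_perm hab).nodup_iff.mp ha
    exact (ih₁ ha).trans _ _ _ (ih₂ hb)

end Basic

section Sub
variable {V : Type*} {G : SimpleGraph V} (P : V → Prop)

theorem commStep_map {w w' : List {u : V // P u}}
    (h : CommStep (G.comap (Subtype.val : {u // P u} → V)) w w') :
    CommStep G (w.map Subtype.val) (w'.map Subtype.val) := by
  obtain ⟨a, b, u, t, hab, rfl, rfl⟩ := h
  exact ⟨a.1, b.1, u.map Subtype.val, t.map Subtype.val, hab, by simp, by simp⟩

theorem eqv_map {w w' : List {u : V // P u}}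
    (h : Relation.EqvGen (CommStep (G.comap (Subtype.val : {u // P u} → V))) w w') :
    Relation.EqvGen (CommStep G) (w.map Subtype.val) (w'.map Subtype.val) := by
  induction h with
  | rel _ _ h => exact EqvGen.rel _ _ (commStep_map P h)
  | refl => exact EqvGen.refl _
  | symm _ _ _ ih => exact ih.symm _ _
  | trans _ _ _ _ _ ih₁ ih₂ => exact ih₁.trans _ _ _ ih₂

theorem commStep_unmap {x y : List V} (h : CommStep G x y)
    (hx : ∀ z ∈ x, P z) (hy : ∀ z ∈ y, P z) :
    CommStep (G.comap (Subtype.val : {u // P u} → V))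
      (x.pmap (fun z hz => (⟨z, hz⟩ : {u // P u})) hx)
      (y.pmap (fun z hz => (⟨z, hz⟩ : {u // P u})) hy) := by
  obtain ⟨a, b, u, t, hab, rfl, rfl⟩ := h
  have ha : P a := hx a (by simp)
  have hb : P b := hx b (by simp)
  have hu : ∀ z ∈ u, P z := fun z hz => hx z (by simp [hz])
  have ht : ∀ z ∈ t, P z := fun z hz => hx z (by simp [hz])
  refine ⟨⟨a, ha⟩, ⟨b, hb⟩, u.pmap (fun z hz => ⟨z, hz⟩) hu,
    t.pmap (fun z hz => ⟨z, hz⟩) ht, hab, ?_, ?_⟩ <;>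
  · rw [List.pmap_append]
    simp [List.pmap]

theorem eqv_unmap {x y : List V}
    (h : Relation.EqvGen (CommStep G) x y) :
    ∀ (hx : ∀ z ∈ x, P z) (hy : ∀ z ∈ y, P z),
    Relation.EqvGen (CommStep (G.comap (Subtype.val : {u // P u} → V)))
      (x.pmap (fun z hz => (⟨z, hz⟩ : {u // P u})) hx)
      (y.pmap (fun z hz => (⟨z, hz⟩ : {u // P u})) hy) := by
  induction h with
  | rel a b h => exact fun hx hy => EqvGen.rel _ _ (commStep_unmap P h hx hy)
  | refl a => exact fun hx hy => EqvGen.refl _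
  | symm a b h ih => exact fun hx hy => (ih hy hx).symm _ _
  | trans a b c hab hbc ih₁ ih₂ =>
    intro hx hy
    have hbm : ∀ z ∈ b, P z := fun z hz => hx z ((eqv_perm hab).mem_iff.mpr hz)
    exact (ih₁ hx hbm).trans _ _ _ (ih₂ hbm hy)

/-- Transfer of `bWords` to a subtype-free description. -/
theorem bWords_comap (k : ℕ) :
    bWords (G.comap (Subtype.val : {u // P u} → V)) k =
      Nat.card (Quotient (Setoid.comap
        (fun w : {w : List V // w.Nodup ∧ w.length = k ∧ ∀ z ∈ w, P z} => w.1)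
        (commSetoid G))) := by
  apply Nat.card_congr
  refine Quotient.congr (Equiv.mk
    (fun w => ⟨w.1.map Subtype.val, w.2.1.map Subtype.val_injective, by simp [w.2.2],
      fun z hz => by obtain ⟨⟨z', hz'⟩, _, rfl⟩ := List.mem_map.mp hz; exact hz'⟩)
    (fun x => ⟨x.1.pmap (fun z hz => ⟨z, hz⟩) x.2.2.2, ?_, ?_⟩)
    ?_ ?_) ?_
  · exact x.2.1.pmap (fun a h b h' e => by simpa using e)
  · simp [x.2.2.1]
  · rintro ⟨w, hw⟩
    apply Subtype.ext
    simp only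
    apply List.map_injective_iff.mpr Subtype.val_injective
    rw [List.map_pmap]
    simp [List.pmap_eq_map]
  · rintro ⟨x, hx⟩
    apply Subtype.ext
    simp only
    rw [List.map_pmap]
    simp [List.pmap_eq_map]
  · rintro ⟨w, hw⟩ ⟨w', hw'⟩
    constructor
    · exact fun h => eqv_map P h
    · intro h
      have := eqv_unmap P h (fun z hz => by obtain ⟨⟨z', hz'⟩, _, rfl⟩ := List.mem_map.mp hz; exact hz')
        (fun z hz => by obtain ⟨⟨z', hz'⟩, _, rfl⟩ := List.mem_map.mp hz; exact hz')
      have e : ∀ (u : List {u : V // P u}) (hu : ∀ z ∈ u.map Subtype.val, P z),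
          (u.map Subtype.val).pmap (fun z hz => (⟨z, hz⟩ : {u // P u})) hu = u := by
        intro u hu
        rw [List.pmap_map]
        simp [List.pmap_eq_map]
      show Relation.EqvGen (CommStep (G.comap (Subtype.val : {u // P u} → V))) w w'
      simp only [Equiv.coe_fn_mk] at this
      rwa [e, e] at this
end Sub

section Helpers
variable {V : Type*} [DecidableEq V] {G : SimpleGraph V} {l v : V}

/-- The boolean predicate picking out the letters `l` and `v`. -/
def plv (l v : V) : V → Bool := fun x => x == l || x == v

theorem plv_spec (hadj : G.Adj l v) :
    ∀ a b : V, ¬ G.Adj a b → plv l v a → plv l v b → a = b := by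
  intro a b hab ha hb
  simp only [plv, Bool.or_eq_true, beq_iff_eq] at ha hb
  rcases ha with rfl | rfl <;> rcases hb with rfl | rfl
  · rfl
  · exact absurd hadj hab
  · exact absurd hadj.symm hab
  · rfl

theorem filter_plv_of_not_mem (hlv : l ≠ v) :
    ∀ {u : List V}, u.Nodup → l ∉ u → u.filter (plv l v) = if v ∈ u then [v] else [] := by
  intro u
  induction u with
  | nil => intro _ _; simp
  | cons x u ih =>
    intro hu hl
    have hxl : x ≠ l := fun e => hl (e ▸ (List.mem_cons_self (a := x) (l := u)))
    have hlu : l ∉ u := fun h => hl (List.mem_cons_of_mem _ h)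
    have ihu := ih (List.nodup_cons.mp hu).2 hlu
    by_cases hxv : x = v
    · subst hxv
      have hvu : x ∉ u := (List.nodup_cons.mp hu).1
      rw [List.filter_cons]
      simp only [plv, beq_self_eq_true, Bool.or_true, if_true]
      rw [ihu, if_neg hvu, if_pos ((List.mem_cons_self (a := x) (l := u)))]
    · rw [List.filter_cons]
      have : plv l v x = false := by
        simp only [plv, Bool.or_eq_true, beq_iff_eq]
        simp [hxl, hxv]
      rw [this]
      simp only [if_false, Bool.false_eq_true]
      rw [ihu]
      by_cases hvm : v ∈ u
      · rw [if_pos hvm, if_pos (List.mem_cons_of_mem _ hvm)]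
      · rw [if_neg hvm, if_neg (by simp only [List.mem_cons]; rintro (rfl | h); exact hxv rfl; exact hvm h)]

theorem filter_plv_decomp (hlv : l ≠ v) {u t : List V}
    (hn : (u ++ l :: t).Nodup) :
    (u ++ l :: t).filter (plv l v) =
      (if v ∈ u then [v] else []) ++ l :: (if v ∈ t then [v] else []) := by
  have hu : u.Nodup := (List.nodup_append'.mp hn).1
  have ht : t.Nodup := (List.nodup_cons.mp (List.nodup_append'.mp hn).2.1).2
  have hlu : l ∉ u := by
    intro h
    exact ((List.nodup_append'.mp hn).2.2) h ((List.mem_cons_self (a := l) (l := t)))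
  have hlt : l ∉ t := (List.nodup_cons.mp (List.nodup_append'.mp hn).2.1).1
  rw [List.filter_append, List.filter_cons]
  have hpl : plv l v l = true := by simp [plv]
  rw [hpl, filter_plv_of_not_mem hlv hu hlu, filter_plv_of_not_mem hlv ht hlt]
  simp

theorem vbefore_iff (hlv : l ≠ v) {u t : List V} (hn : (u ++ l :: t).Nodup) :
    (u ++ l :: t).filter (plv l v) = [v, l] ↔ v ∈ u := by
  rw [filter_plv_decomp hlv hn]
  by_cases hvu : v ∈ u
  · simp only [if_pos hvu]
    have hvt : v ∉ t := by
      intro h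
      exact ((List.nodup_append'.mp hn).2.2) hvu (List.mem_cons_of_mem _ h)
    simp only [if_neg hvt]
    simpa using hvu
  · simp only [if_neg hvu]
    constructor
    · intro h
      by_cases hvt : v ∈ t <;> simp only [if_pos, hvt, if_true, if_false, List.nil_append] at h
      · exact absurd (List.cons.injEq .. ▸ h).1 hlv
      · exact absurd (List.cons.injEq .. ▸ h).1 hlv
    · intro h; exact absurd h hvu

theorem not_vbefore (hlv : l ≠ v) {u t : List V} (hn : (u ++ l :: t).Nodup)
    (h : (u ++ l :: t).filter (plv l v) ≠ [v, l]) : v ∉ u :=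
  fun hv => h ((vbefore_iff hlv hn).mpr hv)

theorem vbefore_not_mem_t (hlv : l ≠ v) {u t : List V} (hn : (u ++ l :: t).Nodup)
    (h : (u ++ l :: t).filter (plv l v) = [v, l]) : v ∉ t := by
  have hvu := (vbefore_iff hlv hn).mp h
  intro hvt
  exact ((List.nodup_append'.mp hn).2.2) hvu (List.mem_cons_of_mem _ hvt)

/-- Decompose a nodup word at the letter `l`. -/
theorem decomp_at {w : List V} (hw : w.Nodup) (hl : l ∈ w) :
    ∃ u t, w = u ++ l :: t ∧ l ∉ u ∧ l ∉ t ∧ w.erase l = u ++ t := by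
  obtain ⟨u, t, rfl⟩ := List.append_of_mem hl
  have hlu : l ∉ u := by
    intro h
    exact ((List.nodup_append'.mp hw).2.2) h ((List.mem_cons_self (a := l) (l := t)))
  have hlt : l ∉ t := (List.nodup_cons.mp (List.nodup_append'.mp hw).2.1).1
  exact ⟨u, t, rfl, hlu, hlt, by rw [List.erase_append_right _ hlu, List.erase_cons_head]⟩

end Helpers

theorem comap_sound {α β : Type*} {f : α → β} {s : Setoid β} {x y : α}
    (h : s.r (f x) (f y)) :
    (Quotient.mk (Setoid.comap f s) x) = Quotient.mk (Setoid.comap f s) y :=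
  Quotient.sound h

section Key
variable {V : Type*} [DecidableEq V] (G : SimpleGraph V) (l v : V)

abbrev Q0 (k : ℕ) :=
  Quotient (Setoid.comap
    (fun w : {w : List V // w.Nodup ∧ w.length = k} => w.1) (commSetoid G))

abbrev Q1 (k : ℕ) :=
  Quotient (Setoid.comap
    (fun w : {w : List V // w.Nodup ∧ w.length = k ∧ ∀ z ∈ w, z ≠ l} => w.1) (commSetoid G))

abbrev Q2 (k : ℕ) :=
  Quotient (Setoid.comap
    (fun w : {w : List V // w.Nodup ∧ w.length = k ∧ ∀ z ∈ w, z ≠ l ∧ z ≠ v} => w.1)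
    (commSetoid G))

theorem erase_h {k : ℕ} {w : List V} (hw : w.Nodup) (hlen : w.length = k + 1)
    (hl : l ∈ w) :
    (w.erase l).Nodup ∧ (w.erase l).length = k ∧ ∀ z ∈ w.erase l, z ≠ l :=
  ⟨hw.erase l, by rw [List.length_erase_of_mem hl, hlen]; rfl,
    fun z hz => (hw.mem_erase_iff.mp hz).1⟩

/-- Forward map, component on full words of length `k+1`. -/
def fwd0 (k : ℕ) (w : {w : List V // w.Nodup ∧ w.length = k + 1}) :
    Q1 G l (k + 1) ⊕ (Q1 G l k ⊕ Q1 G l k) :=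
  if hl : l ∈ w.1 then
    (if w.1.filter (plv l v) = [v, l] then
      Sum.inr (Sum.inr (Quotient.mk _ ⟨w.1.erase l, erase_h l w.2.1 w.2.2 hl⟩))
    else
      Sum.inr (Sum.inl (Quotient.mk _ ⟨w.1.erase l, erase_h l w.2.1 w.2.2 hl⟩)))
  else Sum.inl (Quotient.mk _ ⟨w.1, w.2.1, w.2.2, fun z hz hzl => hl (hzl ▸ hz)⟩)

/-- Forward map, component on words avoiding both `l` and `v`. -/
def fwd2 (k : ℕ)
    (w : {w : List V // w.Nodup ∧ w.length = k ∧ ∀ z ∈ w, z ≠ l ∧ z ≠ v}) :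
    Q1 G l (k + 1) ⊕ (Q1 G l k ⊕ Q1 G l k) :=
  Sum.inr (Sum.inr (Quotient.mk _ ⟨w.1, w.2.1, w.2.2.1, fun z hz => (w.2.2.2 z hz).1⟩))

theorem fwd0_sound (hadj : G.Adj l v) (k : ℕ)
    (a b : {w : List V // w.Nodup ∧ w.length = k + 1})
    (h : Relation.EqvGen (CommStep G) a.1 b.1) :
    fwd0 G l v k a = fwd0 G l v k b := by
  have hmem : l ∈ a.1 ↔ l ∈ b.1 := (eqv_perm h).mem_iff
  have hflt := eqv_filter_eq (plv l v) (plv_spec hadj) h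
  unfold fwd0
  by_cases hl : l ∈ a.1
  · have herase := eqv_erase l h a.2.1
    rw [dif_pos hl, dif_pos (hmem.mp hl), hflt]
    by_cases hf : b.1.filter (plv l v) = [v, l] <;> simp only [if_pos, hf, if_true, if_false]
    · exact congrArg Sum.inr (congrArg Sum.inr (comap_sound herase))
    · exact congrArg Sum.inr (congrArg Sum.inl (comap_sound herase))
  · rw [dif_neg hl, dif_neg (fun hh => hl (hmem.mpr hh))]
    exact congrArg Sum.inl (comap_sound h)

theorem fwd2_sound (k : ℕ)
    (a b : {w : List V // w.Nodup ∧ w.length = k ∧ ∀ z ∈ w, z ≠ l ∧ z ≠ v})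
    (h : Relation.EqvGen (CommStep G) a.1 b.1) :
    fwd2 G l v k a = fwd2 G l v k b :=
  congrArg Sum.inr (congrArg Sum.inr (comap_sound h))

/-- Backward map, component on `Q1 (k+1)`. -/
def bwd1 (k : ℕ)
    (w : {w : List V // w.Nodup ∧ w.length = k + 1 ∧ ∀ z ∈ w, z ≠ l}) :
    Q0 G (k + 1) ⊕ Q2 G l v k :=
  Sum.inl (Quotient.mk _ ⟨w.1, w.2.1, w.2.2.1⟩)

/-- Backward map, middle component. -/
def bwdm (k : ℕ)
    (w : {w : List V // w.Nodup ∧ w.length = k ∧ ∀ z ∈ w, z ≠ l}) :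
    Q0 G (k + 1) ⊕ Q2 G l v k :=
  Sum.inl (Quotient.mk _ ⟨l :: w.1,
    List.nodup_cons.mpr ⟨fun h => (w.2.2.2 l h) rfl, w.2.1⟩, by simp [w.2.2.1]⟩)

/-- Backward map, right component. -/
def bwdr (k : ℕ)
    (w : {w : List V // w.Nodup ∧ w.length = k ∧ ∀ z ∈ w, z ≠ l}) :
    Q0 G (k + 1) ⊕ Q2 G l v k :=
  if hv : v ∈ w.1 then
    Sum.inl (Quotient.mk _ ⟨w.1 ++ [l],
      List.nodup_append'.mpr ⟨w.2.1, List.nodup_singleton l,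
        fun z hz hzl => (w.2.2.2 z hz) (by simpa using hzl)⟩,
      by simp [w.2.2.1]⟩)
  else
    Sum.inr (Quotient.mk _ ⟨w.1, w.2.1, w.2.2.1,
      fun z hz => ⟨w.2.2.2 z hz, fun e => hv (e ▸ hz)⟩⟩)

theorem bwd1_sound (k : ℕ) (a b) (h : Relation.EqvGen (CommStep G) (Subtype.val a) (Subtype.val b)) :
    bwd1 G l v k a = bwd1 G l v k b :=
  congrArg Sum.inl (comap_sound h)

theorem bwdm_sound (k : ℕ) (a b) (h : Relation.EqvGen (CommStep G) (Subtype.val a) (Subtype.val b)) :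
    bwdm G l v k a = bwdm G l v k b :=
  congrArg Sum.inl (comap_sound (eqv_cons l h))

theorem bwdr_sound (k : ℕ) (a b) (h : Relation.EqvGen (CommStep G) (Subtype.val a) (Subtype.val b)) :
    bwdr G l v k a = bwdr G l v k b := by
  have hmem : v ∈ a.1 ↔ v ∈ b.1 := (eqv_perm h).mem_iff
  unfold bwdr
  by_cases hv : v ∈ a.1
  · rw [dif_pos hv, dif_pos (hmem.mp hv)]
    exact congrArg Sum.inl (comap_sound (eqv_append_right [l] h))
  · rw [dif_neg hv, dif_neg (fun hh => hv (hmem.mpr hh))]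
    exact congrArg Sum.inr (comap_sound h)

/-- The combined forward map. -/
def fwdMap (hadj : G.Adj l v) (k : ℕ) :
    Q0 G (k + 1) ⊕ Q2 G l v k → Q1 G l (k + 1) ⊕ (Q1 G l k ⊕ Q1 G l k) :=
  Sum.elim (Quotient.lift (fwd0 G l v k) (fun a b h => fwd0_sound G l v hadj k a b h))
    (Quotient.lift (fwd2 G l v k) (fun a b h => fwd2_sound G l v k a b h))

/-- The combined backward map. -/
def bwdMap (k : ℕ) :
    Q1 G l (k + 1) ⊕ (Q1 G l k ⊕ Q1 G l k) → Q0 G (k + 1) ⊕ Q2 G l v k :=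
  Sum.elim (Quotient.lift (bwd1 G l v k) (fun a b h => bwd1_sound G l v k a b h))
    (Sum.elim (Quotient.lift (bwdm G l v k) (fun a b h => bwdm_sound G l v k a b h))
      (Quotient.lift (bwdr G l v k) (fun a b h => bwdr_sound G l v k a b h)))

theorem bwdMap_fwd0 (hadj : G.Adj l v) (huniq : ∀ u : V, G.Adj l u → u = v) (k : ℕ)
    (w : {w : List V // w.Nodup ∧ w.length = k + 1}) :
    bwdMap G l v k (fwd0 G l v k w) = Sum.inl (Quotient.mk _ w) := by
  obtain ⟨w, hw⟩ := w
  have hlv : l ≠ v := hadj.ne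
  unfold fwd0
  by_cases hl : l ∈ w
  · obtain ⟨u, t, hwdec, hlu, hlt, herase⟩ := decomp_at hw.1 hl
    rw [dif_pos hl]
    by_cases hf : w.filter (plv l v) = [v, l]
    · rw [if_pos hf]
      show bwdr G l v k ⟨w.erase l, erase_h l hw.1 hw.2 hl⟩ = _
      unfold bwdr
      have hvw : v ∈ w := by
        have : v ∈ w.filter (plv l v) := by rw [hf]; exact (List.mem_cons_self (a := v) (l := [l]))
        exact (List.mem_filter.mp this).1
      have hv : v ∈ w.erase l := hw.1.mem_erase_iff.mpr ⟨Ne.symm hlv, hvw⟩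
      rw [dif_pos hv]
      refine congrArg Sum.inl (comap_sound ?_)
      show Relation.EqvGen (CommStep G) (w.erase l ++ [l]) w
      rw [herase, hwdec]
      refine ((eqv_bubble_back l t ?_ u)).symm _ _
      intro y hy hAdj
      have hyv : y ≠ v := fun e =>
        (vbefore_not_mem_t hlv (hwdec ▸ hw.1) (hwdec ▸ hf)) (e ▸ hy)
      exact hyv (huniq y hAdj)
    · rw [if_neg hf]
      show bwdm G l v k ⟨w.erase l, erase_h l hw.1 hw.2 hl⟩ = _
      unfold bwdm
      refine congrArg Sum.inl (comap_sound ?_)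
      show Relation.EqvGen (CommStep G) (l :: (w.erase l)) w
      rw [herase, hwdec]
      refine ((eqv_bubble_front l u ?_ t)).symm _ _
      intro y hy hAdj
      have hyv : y ≠ v := fun e =>
        (not_vbefore hlv (hwdec ▸ hw.1) (hwdec ▸ hf)) (e ▸ hy)
      exact hyv (huniq y hAdj.symm)
  · rw [dif_neg hl]
    show bwd1 G l v k ⟨w, hw.1, hw.2, fun z hz hzl => hl (hzl ▸ hz)⟩ = _
    unfold bwd1
    exact congrArg Sum.inl (comap_sound (Relation.EqvGen.refl _))

theorem bwdMap_fwd2 (k : ℕ)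
    (w : {w : List V // w.Nodup ∧ w.length = k ∧ ∀ z ∈ w, z ≠ l ∧ z ≠ v}) :
    bwdMap G l v k (fwd2 G l v k w) = Sum.inr (Quotient.mk _ w) := by
  obtain ⟨w, hw⟩ := w
  unfold fwd2
  show bwdr G l v k ⟨w, hw.1, hw.2.1, fun z hz => (hw.2.2 z hz).1⟩ = _
  unfold bwdr
  have hv : v ∉ w := fun h => (hw.2.2 v h).2 rfl
  rw [dif_neg hv]

theorem fwdMap_bwd1 (hadj : G.Adj l v) (k : ℕ)
    (w : {w : List V // w.Nodup ∧ w.length = k + 1 ∧ ∀ z ∈ w, z ≠ l}) :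
    fwdMap G l v hadj k (bwd1 G l v k w) = Sum.inl (Quotient.mk _ w) := by
  obtain ⟨w, hw⟩ := w
  unfold bwd1
  show fwd0 G l v k ⟨w, hw.1, hw.2.1⟩ = _
  unfold fwd0
  have hl : l ∉ w := fun h => hw.2.2 l h rfl
  rw [dif_neg hl]

theorem fwdMap_bwdm (hadj : G.Adj l v) (k : ℕ)
    (w : {w : List V // w.Nodup ∧ w.length = k ∧ ∀ z ∈ w, z ≠ l}) :
    fwdMap G l v hadj k (bwdm G l v k w) = Sum.inr (Sum.inl (Quotient.mk _ w)) := by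
  obtain ⟨w, hw⟩ := w
  have hlv : l ≠ v := hadj.ne
  unfold bwdm
  show fwd0 G l v k ⟨l :: w, List.nodup_cons.mpr ⟨fun h => (hw.2.2 l h) rfl, hw.1⟩,
    by simp [hw.2.1]⟩ = Sum.inr (Sum.inl (Quotient.mk _ ⟨w, hw⟩))
  unfold fwd0
  have hl : l ∈ l :: w := (List.mem_cons_self (a := l) (l := w))
  rw [dif_pos hl]
  have hf : (l :: w).filter (plv l v) ≠ [v, l] := by
    rw [List.filter_cons]
    have hpl : plv l v l = true := by simp [plv]
    rw [hpl]
    intro h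
    simp only [if_true] at h
    exact hlv (List.cons.injEq .. ▸ h).1
  rw [if_neg hf]
  refine congrArg Sum.inr (congrArg Sum.inl (comap_sound ?_))
  show Relation.EqvGen (CommStep G) ((l :: w).erase l) w
  rw [List.erase_cons_head]
  exact Relation.EqvGen.refl _

theorem fwdMap_bwdr (hadj : G.Adj l v) (k : ℕ)
    (w : {w : List V // w.Nodup ∧ w.length = k ∧ ∀ z ∈ w, z ≠ l}) :
    fwdMap G l v hadj k (bwdr G l v k w) = Sum.inr (Sum.inr (Quotient.mk _ w)) := by
  obtain ⟨w, hw⟩ := w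
  have hlv : l ≠ v := hadj.ne
  have hlw : l ∉ w := fun h => hw.2.2 l h rfl
  unfold bwdr
  by_cases hv : v ∈ w
  · rw [dif_pos hv]
    show fwd0 G l v k ⟨w ++ [l],
      List.nodup_append'.mpr ⟨hw.1, List.nodup_singleton l,
        fun z hz hzl => (hw.2.2 z hz) (by simpa using hzl)⟩,
      by simp [hw.2.1]⟩ = Sum.inr (Sum.inr (Quotient.mk _ ⟨w, hw⟩))
    unfold fwd0
    have hl : l ∈ w ++ [l] := by simp
    rw [dif_pos hl]
    have hf : (w ++ [l]).filter (plv l v) = [v, l] := by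
      rw [List.filter_append, filter_plv_of_not_mem hlv hw.1 hlw, if_pos hv]
      have hpl : plv l v l = true := by simp [plv]
      simp [List.filter_cons, hpl]
    rw [if_pos hf]
    refine congrArg Sum.inr (congrArg Sum.inr (comap_sound ?_))
    show Relation.EqvGen (CommStep G) ((w ++ [l]).erase l) w
    rw [List.erase_append_right _ hlw, List.erase_cons_head, List.append_nil]
    exact Relation.EqvGen.refl _
  · rw [dif_neg hv]
    rfl

/-- The key bijection. -/
def keyEquiv (hadj : G.Adj l v) (huniq : ∀ u : V, G.Adj l u → u = v) (k : ℕ) :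
    (Q0 G (k + 1) ⊕ Q2 G l v k) ≃ (Q1 G l (k + 1) ⊕ (Q1 G l k ⊕ Q1 G l k)) where
  toFun := fwdMap G l v hadj k
  invFun := bwdMap G l v k
  left_inv := by
    rintro (q | q)
    · induction q using Quotient.ind with
      | _ w => exact bwdMap_fwd0 G l v hadj huniq k w
    · induction q using Quotient.ind with
      | _ w => exact bwdMap_fwd2 G l v k w
  right_inv := by
    rintro (q | q | q)
    · induction q using Quotient.ind with
      | _ w => exact fwdMap_bwd1 G l v hadj k w
    · induction q using Quotient.ind with
      | _ w => exact fwdMap_bwdm G l v hadj k w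
    · induction q using Quotient.ind with
      | _ w => exact fwdMap_bwdr G l v hadj k w

end Key

section Count
variable {V : Type*} [DecidableEq V] [Fintype V] (G : SimpleGraph V) (l v : V)

instance finW0 (k : ℕ) : Finite {w : List V // w.Nodup ∧ w.length = k} := by
  have h : {w : List V | w.length = k}.Finite := List.finite_length_eq V k
  exact (h.subset (fun w hw => hw.2)).to_subtype

instance finWP (P : V → Prop) (k : ℕ) :
    Finite {w : List V // w.Nodup ∧ w.length = k ∧ ∀ z ∈ w, P z} := by
  have h : {w : List V | w.length = k}.Finite := List.finite_length_eq V k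
  exact (h.subset (fun w hw => hw.2.1)).to_subtype

/-- The key counting identity. -/
theorem key_card (hadj : G.Adj l v) (huniq : ∀ u : V, G.Adj l u → u = v) (k : ℕ) :
    bWords G (k + 1) + bWords (G.comap (fun u : {u : V // u ≠ l ∧ u ≠ v} => (u : V))) k =
      bWords (G.comap (fun u : {u : V // u ≠ l} => (u : V))) (k + 1) +
        2 * bWords (G.comap (fun u : {u : V // u ≠ l} => (u : V))) k := by
  have h2 : bWords (G.comap (fun u : {u : V // u ≠ l ∧ u ≠ v} => (u : V))) k =
      Nat.card (Q2 G l v k) := bWords_comap (fun z => z ≠ l ∧ z ≠ v) k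
  have h1 : ∀ m, bWords (G.comap (fun u : {u : V // u ≠ l} => (u : V))) m =
      Nat.card (Q1 G l m) := fun m => bWords_comap (fun z => z ≠ l) m
  have h0 : bWords G (k + 1) = Nat.card (Q0 G (k + 1)) := rfl
  rw [h0, h2, h1, h1]
  have := Nat.card_congr (keyEquiv G l v hadj huniq k)
  rw [Nat.card_sum, Nat.card_sum, Nat.card_sum] at this
  omega

theorem bWords_zero {W : Type*} (H : SimpleGraph W) : bWords H 0 = 1 := by
  have : Unique (Quotient (Setoid.comap
      (fun w : {w : List W // w.Nodup ∧ w.length = 0} => w.1) (commSetoid H))) := by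
    refine ⟨⟨Quotient.mk _ ⟨[], by simp⟩⟩, ?_⟩
    intro q
    induction q using Quotient.ind with
    | _ w =>
      obtain ⟨w, hw⟩ := w
      have : w = [] := List.length_eq_zero_iff.mp hw.2
      subst this
      rfl
  exact Nat.card_unique

theorem bWords_of_card_lt {W : Type*} [Fintype W] (H : SimpleGraph W) (k : ℕ)
    (h : Fintype.card W < k) : bWords H k = 0 := by
  have : IsEmpty {w : List W // w.Nodup ∧ w.length = k} := by
    refine ⟨fun w => ?_⟩
    have := w.2.1.length_le_card
    omega
  exact Nat.card_of_isEmpty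

end Count

end LeafRec

open LeafRec in
/-- **Leaf recursion for the boolean number.**  If `ℓ` is a vertex of degree 1 in `G`
with unique neighbor `v`, then `β(G) = β(G ∖ ℓ) + β(G ∖ {ℓ, v})`, where `G ∖ X` is the
induced subgraph on the complement of `X`. -/
theorem booleanNumber_leaf_recursion {V : Type*} [Fintype V] [DecidableEq V]
    (G : SimpleGraph V) (l v : V) (hadj : G.Adj l v)
    (huniq : ∀ u : V, G.Adj l u → u = v) :
    booleanNumber G =
      booleanNumber (G.comap (fun u : {u : V // u ≠ l} => (u : V))) +
      booleanNumber (G.comap (fun u : {u : V // u ≠ l ∧ u ≠ v} => (u : V))) := by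
  have hlv : l ≠ v := hadj.ne
  have hn : 2 ≤ Fintype.card V := Fintype.one_lt_card_iff_nontrivial.mpr ⟨⟨l, v, hlv⟩⟩
  set n := Fintype.card V with hn'
  have c1 : Fintype.card {u : V // u ≠ l} = n - 1 := by
    rw [Fintype.card_subtype_compl, Fintype.card_subtype_eq]
  have cvl : Fintype.card {u : V // u = l ∨ u = v} = 2 := by
    rw [Fintype.card_subtype]
    have he : Finset.univ.filter (fun u : V => u = l ∨ u = v) = {l, v} := by
      ext u
      simp
    rw [he, Finset.card_insert_of_notMem (by simp [hlv]), Finset.card_singleton]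
  have c2 : Fintype.card {u : V // u ≠ l ∧ u ≠ v} = n - 2 := by
    have he : Fintype.card {u : V // u ≠ l ∧ u ≠ v}
        = Fintype.card {u : V // ¬(u = l ∨ u = v)} :=
      Fintype.card_congr (Equiv.subtypeEquivRight (fun u => by tauto))
    rw [he, Fintype.card_subtype_compl, cvl]
  set B : ℕ → ℤ := fun k => (bWords G k : ℤ) with hB
  set B1 : ℕ → ℤ :=
    fun k => (bWords (G.comap (fun u : {u : V // u ≠ l} => (u : V))) k : ℤ) with hB1
  set B2 : ℕ → ℤ :=
    fun k => (bWords (G.comap (fun u : {u : V // u ≠ l ∧ u ≠ v} => (u : V))) k : ℤ) with hB2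
  have hrec : ∀ k : ℕ, B (k + 1) = B1 (k + 1) + 2 * B1 k - B2 k := by
    intro k
    have h := key_card G l v hadj huniq k
    have h' := congrArg (Nat.cast : ℕ → ℤ) h
    push_cast at h'
    simp only [hB, hB1, hB2]
    linarith
  have hB0 : B 0 = 1 := by simp [hB, bWords_zero]
  have hB10 : B1 0 = 1 := by simp [hB1, bWords_zero]
  have hB1n : B1 n = 0 := by
    have : bWords (G.comap (fun u : {u : V // u ≠ l} => (u : V))) n = 0 :=
      bWords_of_card_lt _ n (by omega)
    simp [hB1, this]
  have hB2n : B2 (n - 1) = 0 := by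
    have : bWords (G.comap (fun u : {u : V // u ≠ l ∧ u ≠ v} => (u : V))) (n - 1) = 0 :=
      bWords_of_card_lt _ (n - 1) (by omega)
    simp [hB2, this]
  simp only [booleanNumber, c1, c2]
  have e1 : n - 1 + 1 = n := by omega
  have e2 : n - 2 + 1 = n - 1 := by omega
  rw [e1, e2]
  set S1 : ℤ := ∑ k ∈ Finset.range n, (-1) ^ k * B1 k with hS1
  set S2 : ℤ := ∑ k ∈ Finset.range (n - 1), (-1) ^ k * B2 k with hS2
  have hsum : ∑ k ∈ Finset.range (n + 1), (-1 : ℤ) ^ k * B k = -S1 + S2 := by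
    rw [Finset.sum_range_succ' (fun k => (-1 : ℤ) ^ k * B k) n]
    have hc : ∀ i ∈ Finset.range n, (-1 : ℤ) ^ (i + 1) * B (i + 1)
        = ((-1) ^ (i + 1) * B1 (i + 1)) + ((-2) * ((-1) ^ i * B1 i) + ((-1) ^ i * B2 i)) := by
      intro i _
      rw [hrec i, pow_succ]
      ring
    rw [Finset.sum_congr rfl hc, Finset.sum_add_distrib, Finset.sum_add_distrib]
    have hA : ∑ i ∈ Finset.range n, (-1 : ℤ) ^ (i + 1) * B1 (i + 1) = S1 - 1 := by
      have h1 := Finset.sum_range_succ' (fun k => (-1 : ℤ) ^ k * B1 k) n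
      have h2 := Finset.sum_range_succ (fun k => (-1 : ℤ) ^ k * B1 k) n
      rw [h2] at h1
      simp only [pow_zero, one_mul, hB10, hB1n, mul_zero, add_zero] at h1
      rw [← hS1] at h1
      linarith
    have hC : ∑ i ∈ Finset.range n, (-2 : ℤ) * ((-1) ^ i * B1 i) = -2 * S1 := by
      rw [← Finset.mul_sum, hS1]
    have hD : ∑ i ∈ Finset.range n, (-1 : ℤ) ^ i * B2 i = S2 := by
      have hn1 : n = (n - 1) + 1 := by omega
      rw [hn1, Finset.sum_range_succ, hB2n]
      simp [hS2]
    rw [hA, hC, hD]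
    simp only [pow_zero, one_mul, hB0]
    ring
  rw [hsum]
  have p1 : (-1 : ℤ) ^ n = -(-1 : ℤ) ^ (n - 1) := by
    conv_lhs => rw [← e1]
    rw [pow_succ]
    ring
  have p2 : (-1 : ℤ) ^ (n - 2) = (-1 : ℤ) ^ n := by
    have : n - 2 + 2 = n := by omega
    conv_rhs => rw [← this]
    rw [pow_add]
    simp
  rw [p2, p1]
  ring
end

section
/- For every n ≥ 2, the star graph S_n (the tree on n vertices having one vertex adjacent to each of the other n−1 vertices, and no other edges) satisfies β(S_n) = 1. -/
/-- The star graph on `n` vertices: vertex `0` is adjacent to every other vertex,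
and there are no other edges. -/
def starG (n : ℕ) : SimpleGraph (Fin n) where
  Adj i j := i ≠ j ∧ (i.1 = 0 ∨ j.1 = 0)
  symm := ⟨by intro i j ⟨h1, h2⟩; exact ⟨h1.symm, h2.symm⟩⟩
  loopless := ⟨by intro i h; exact h.1 rfl⟩

namespace StarBool

open Relation

variable {n : ℕ} [NeZero n]

lemma fin_val_zero_iff (i : Fin n) : i.1 = 0 ↔ i = 0 := by
  constructor
  · intro h; exact Fin.ext (by simpa using h)
  · rintro rfl; simp

lemma star_not_adj {a b : Fin n} (ha : a ≠ 0) (hb : b ≠ 0) : ¬ (starG n).Adj a b := by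
  rintro ⟨h1, h2 | h2⟩
  · exact ha ((fin_val_zero_iff a).1 h2)
  · exact hb ((fin_val_zero_iff b).1 h2)

/-- The complete invariant: split the word at occurrences of `0` into multisets. -/
def inv : List (Fin n) → List (Multiset (Fin n))
  | [] => [0]
  | x :: xs => if x = 0 then (0 : Multiset (Fin n)) :: inv xs
      else (x ::ₘ (inv xs).headI) :: (inv xs).tail

lemma inv_cons_zero (xs : List (Fin n)) :
    inv ((0 : Fin n) :: xs) = (0 : Multiset (Fin n)) :: inv xs := by simp [inv]

lemma inv_cons_ne {x : Fin n} (hx : x ≠ 0) (xs : List (Fin n)) :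
    inv (x :: xs) = (x ::ₘ (inv xs).headI) :: (inv xs).tail := by simp [inv, hx]

lemma inv_ne_nil (w : List (Fin n)) : inv w ≠ [] := by
  cases w with
  | nil => simp [inv]
  | cons x xs =>
    by_cases h : x = 0
    · subst h; simp [inv_cons_zero]
    · simp [inv_cons_ne h]

lemma zero_not_mem_inv (w : List (Fin n)) : ∀ m ∈ inv w, (0 : Fin n) ∉ m := by
  induction w with
  | nil => intro m hm; simp [inv] at hm; simp [hm]
  | cons x xs ih =>
    by_cases h : x = 0
    · subst h; rw [inv_cons_zero]
      intro m hm
      rcases List.mem_cons.1 hm with rfl | hm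
      · simp
      · exact ih m hm
    · rw [inv_cons_ne h]
      cases hinv : inv xs with
      | nil => exact absurd hinv (inv_ne_nil xs)
      | cons m0 r =>
        intro m hm
        rcases List.mem_cons.1 hm with rfl | hm
        · simp only [List.headI]
          rw [Multiset.mem_cons]
          rintro (h0 | h0)
          · exact h h0.symm
          · exact ih m0 (by rw [hinv]; exact List.mem_cons_self) h0
        · exact ih m (by rw [hinv]; exact List.mem_cons_of_mem _ (by simpa using hm))

lemma inv_swap (u v : List (Fin n)) {a b : Fin n} (ha : a ≠ 0) (hb : b ≠ 0) :
    inv (u ++ a :: b :: v) = inv (u ++ b :: a :: v) := by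
  induction u with
  | nil =>
    simp only [List.nil_append]
    rw [inv_cons_ne ha, inv_cons_ne hb, inv_cons_ne hb, inv_cons_ne ha]
    simp [Multiset.cons_swap]
  | cons x u ih =>
    by_cases hx : x = 0
    · subst hx; simp only [List.cons_append, inv_cons_zero, ih]
    · simp only [List.cons_append, inv_cons_ne hx, ih]

lemma inv_commStep {w w' : List (Fin n)} (h : CommStep (starG n) w w') : inv w = inv w' := by
  obtain ⟨a, b, u, v, hnadj, rfl, rfl⟩ := h
  by_cases ha : a = 0
  · by_cases hb : b = 0
    · subst ha; subst hb; rfl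
    · subst ha; exact absurd ⟨fun h => hb h.symm, Or.inl (by simp)⟩ hnadj
  · by_cases hb : b = 0
    · subst hb; exact absurd ⟨ha, Or.inr (by simp)⟩ hnadj
    · exact inv_swap u v ha hb

lemma inv_eqv {w w' : List (Fin n)}
    (h : EqvGen (CommStep (starG n)) w w') : inv w = inv w' := by
  induction h with
  | rel _ _ h => exact inv_commStep h
  | refl _ => rfl
  | symm _ _ _ ih => exact ih.symm
  | trans _ _ _ _ _ ih1 ih2 => exact ih1.trans ih2


lemma commStep_context {V : Type*} (G : SimpleGraph V) {w w' : List V} (u v : List V)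
    (h : CommStep G w w') : CommStep G (u ++ w ++ v) (u ++ w' ++ v) := by
  obtain ⟨a, b, u', v', hn, rfl, rfl⟩ := h
  exact ⟨a, b, u ++ u', v' ++ v, hn, by simp, by simp⟩

lemma eqvGen_context {V : Type*} (G : SimpleGraph V) {w w' : List V} (u v : List V)
    (h : EqvGen (CommStep G) w w') : EqvGen (CommStep G) (u ++ w ++ v) (u ++ w' ++ v) := by
  induction h with
  | rel _ _ h => exact EqvGen.rel _ _ (commStep_context G u v h)
  | refl _ => exact EqvGen.refl _
  | symm _ _ _ ih => exact EqvGen.symm _ _ ih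
  | trans _ _ _ _ _ ih1 ih2 => exact EqvGen.trans _ _ _ ih1 ih2

lemma perm_eqv {l₁ l₂ : List (Fin n)} (hp : l₁.Perm l₂) :
    ∀ (_ : ∀ x ∈ l₁, x ≠ 0) (u v : List (Fin n)),
      EqvGen (CommStep (starG n)) (u ++ l₁ ++ v) (u ++ l₂ ++ v) := by
  induction hp with
  | nil => intro _ u v; exact EqvGen.refl _
  | cons x h ih =>
    intro h0 u v
    have := ih (fun y hy => h0 y (List.mem_cons_of_mem x hy)) (u ++ [x]) v
    simpa using this
  | swap x y l =>
    intro h0 u v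
    refine EqvGen.rel _ _ ⟨y, x, u, l ++ v, star_not_adj (h0 y (by simp)) (h0 x (by simp)),
      by simp, by simp⟩
  | trans h1 h2 ih1 ih2 =>
    intro h0 u v
    exact EqvGen.trans _ _ _ (ih1 h0 u v)
      (ih2 (fun y hy => h0 y (h1.mem_iff.mpr hy)) u v)

/-- Canonical word associated to an invariant value. -/
def canon : List (Multiset (Fin n)) → List (Fin n)
  | [] => []
  | [m] => m.sort (· ≤ ·)
  | m :: r :: t => m.sort (· ≤ ·) ++ (0 : Fin n) :: canon (r :: t)

lemma equiv_canon (w : List (Fin n)) : EqvGen (CommStep (starG n)) w (canon (inv w)) := by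
  induction w with
  | nil =>
    have : canon (inv ([] : List (Fin n))) = [] := by simp [inv, canon]
    rw [this]; exact EqvGen.refl _
  | cons x xs ih =>
    by_cases hx : x = 0
    · subst hx
      rw [inv_cons_zero]
      cases h : inv xs with
      | nil => exact absurd h (inv_ne_nil xs)
      | cons m r =>
        have hc : canon ((0 : Multiset (Fin n)) :: m :: r) = (0 : Fin n) :: canon (m :: r) := by
          simp [canon]
        rw [hc, ← h]
        have := eqvGen_context (starG n) [(0 : Fin n)] [] ih
        simpa using this
    · cases h : inv xs with
      | nil => exact absurd h (inv_ne_nil xs)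
      | cons m r =>
        rw [inv_cons_ne hx, h]
        simp only [List.headI, List.tail]
        have h1 : EqvGen (CommStep (starG n)) (x :: xs) (x :: canon (m :: r)) := by
          have := eqvGen_context (starG n) [x] [] ih
          rw [h] at this
          simpa using this
        refine EqvGen.trans _ _ _ h1 ?_
        have hperm : (x :: m.sort (· ≤ ·)).Perm ((x ::ₘ m).sort (· ≤ ·)) := by
          rw [← Multiset.coe_eq_coe]
          simp [← Multiset.cons_coe, Multiset.sort_eq]
        have h0 : ∀ y ∈ x :: m.sort (· ≤ ·), y ≠ 0 := by
          intro y hy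
          rcases List.mem_cons.1 hy with rfl | hy
          · exact hx
          · intro h0'; subst h0'
            exact zero_not_mem_inv xs m (by rw [h]; exact List.mem_cons_self)
              ((Multiset.mem_sort _).1 hy)
        cases r with
        | nil =>
          have := perm_eqv hperm h0 [] []
          simpa [canon] using this
        | cons r2 t =>
          have := perm_eqv hperm h0 [] ((0 : Fin n) :: canon (r2 :: t))
          simpa [canon] using this

lemma eqv_of_inv_eq {w w' : List (Fin n)} (h : inv w = inv w') :
    EqvGen (CommStep (starG n)) w w' := by
  refine EqvGen.trans _ _ _ (equiv_canon w) ?_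
  rw [h]
  exact EqvGen.symm _ _ (equiv_canon w')


lemma inv_length (w : List (Fin n)) : (inv w).length = w.count 0 + 1 := by
  induction w with
  | nil => simp [inv]
  | cons x xs ih =>
    by_cases hx : x = 0
    · subst hx
      rw [inv_cons_zero]
      simp [List.count_cons, ih]
    · rw [inv_cons_ne hx]
      cases h : inv xs with
      | nil => exact absurd h (inv_ne_nil xs)
      | cons m r =>
        rw [h] at ih
        simp only [List.length_cons, List.tail_cons] at ih ⊢
        simp [List.count_cons, hx, ← ih]

lemma inv_sum (w : List (Fin n)) :
    (inv w).sum = (↑(w.filter (fun x => x ≠ 0)) : Multiset (Fin n)) := by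
  induction w with
  | nil => simp [inv]
  | cons x xs ih =>
    by_cases hx : x = 0
    · subst hx
      rw [inv_cons_zero]
      simp [List.filter_cons, ih]
    · rw [inv_cons_ne hx]
      cases h : inv xs with
      | nil => exact absurd h (inv_ne_nil xs)
      | cons m r =>
        rw [h] at ih
        simp only [List.sum_cons, List.headI, List.tail_cons] at ih ⊢
        rw [List.filter_cons, if_pos (by simpa using hx)]
        rw [← Multiset.cons_coe, ← ih, Multiset.cons_add]

lemma length_filter_zero (w : List (Fin n)) :
    (w.filter (fun x => x ≠ 0)).length + w.count 0 = w.length := by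
  induction w with
  | nil => simp
  | cons x xs ih =>
    by_cases hx : x = 0
    · subst hx; simp [List.filter_cons, List.count_cons, ← ih]; omega
    · simp [List.filter_cons, List.count_cons, hx, ← ih]; omega

lemma inv_nozero (l : List (Fin n)) (h : ∀ x ∈ l, x ≠ 0) :
    inv l = [(↑l : Multiset (Fin n))] := by
  induction l with
  | nil => simp [inv]
  | cons x xs ih =>
    rw [inv_cons_ne (h x (by simp)), ih (fun y hy => h y (List.mem_cons_of_mem _ hy))]
    simp [← Multiset.cons_coe]

lemma inv_append_nozero (l w : List (Fin n)) (h : ∀ x ∈ l, x ≠ 0) :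
    inv (l ++ w) = ((↑l : Multiset (Fin n)) + (inv w).headI) :: (inv w).tail := by
  induction l with
  | nil =>
    cases hw : inv w with
    | nil => exact absurd hw (inv_ne_nil w)
    | cons m r => rw [List.nil_append, hw]; simp
  | cons x xs ih =>
    rw [List.cons_append, inv_cons_ne (h x (by simp)),
      ih (fun y hy => h y (List.mem_cons_of_mem _ hy))]
    simp [← Multiset.cons_coe, Multiset.cons_add]

variable (n) in
/-- Data indexing the commutation classes of injective words of length `k` on the star. -/
def Tk (k : ℕ) : Type :=
  {s : Finset (Fin n) // (0 : Fin n) ∉ s ∧ s.card = k} ⊕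
  {p : Finset (Fin n) × Finset (Fin n) //
    (0 : Fin n) ∉ p.1 ∧ (0 : Fin n) ∉ p.2 ∧ Disjoint p.1 p.2 ∧ p.1.card + p.2.card + 1 = k}

variable (n) in
def wordOf (k : ℕ) : Tk n k → List (Fin n)
  | .inl s => s.1.sort (· ≤ ·)
  | .inr p => p.1.1.sort (· ≤ ·) ++ (0 : Fin n) :: p.1.2.sort (· ≤ ·)

lemma inv_wordOf {k : ℕ} (t : Tk n k) :
    inv (wordOf n k t) = (match t with
      | .inl s => [s.1.1]
      | .inr p => [p.1.1.1, p.1.2.1]) := by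
  match t with
  | .inl s =>
    rw [wordOf, inv_nozero _ (fun y hy h0 => s.2.1 (h0 ▸ (Finset.mem_sort _).1 hy))]
    simp [Finset.sort_eq]
  | .inr p =>
    rw [wordOf, inv_append_nozero _ _ (fun y hy h0 => p.2.1 (h0 ▸ (Finset.mem_sort _).1 hy))]
    rw [inv_cons_zero, inv_nozero _ (fun y hy h0 => p.2.2.1 (h0 ▸ (Finset.mem_sort _).1 hy))]
    simp [Finset.sort_eq]

lemma wordOf_nodup {k : ℕ} (t : Tk n k) : (wordOf n k t).Nodup := by
  match t with
  | .inl s => exact Finset.sort_nodup _ _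
  | .inr p =>
    rw [wordOf]
    refine List.Nodup.append (Finset.sort_nodup _ _) ?_ ?_
    · refine List.nodup_cons.2 ⟨fun h => p.2.2.1 ((Finset.mem_sort _).1 h),
        Finset.sort_nodup _ _⟩
    · intro a ha hb
      rcases List.mem_cons.1 hb with rfl | hb
      · exact p.2.1 ((Finset.mem_sort _).1 ha)
      · exact Finset.disjoint_left.1 p.2.2.2.1 ((Finset.mem_sort _).1 ha)
          ((Finset.mem_sort _).1 hb)

lemma wordOf_length {k : ℕ} (t : Tk n k) : (wordOf n k t).length = k := by
  match t with
  | .inl s =>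
    rw [wordOf]
    simpa [Finset.length_sort] using s.2.2
  | .inr p =>
    rw [wordOf]
    simp only [List.length_append, List.length_cons, Finset.length_sort]
    omega


variable (n) in
abbrev QT (k : ℕ) :=
  Quotient (Setoid.comap
    (fun w : {w : List (Fin n) // w.Nodup ∧ w.length = k} => w.1) (commSetoid (starG n)))

variable (n) in
def toQ (k : ℕ) (t : Tk n k) : QT n k :=
  Quotient.mk _ ⟨wordOf n k t, wordOf_nodup t, wordOf_length t⟩

lemma toQ_injective (k : ℕ) : Function.Injective (toQ n k) := by
  intro t t' h
  have hr : Relation.EqvGen (CommStep (starG n)) (wordOf n k t) (wordOf n k t') :=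
    Quotient.exact h
  have hinv : inv (wordOf n k t) = inv (wordOf n k t') := inv_eqv hr
  rw [inv_wordOf, inv_wordOf] at hinv
  match t, t' with
  | .inl s, .inl s' =>
    simp only [List.cons.injEq] at hinv
    exact congrArg _ (Subtype.ext (Finset.val_injective hinv.1))
  | .inl s, .inr p => simp at hinv
  | .inr p, .inl s => simp at hinv
  | .inr p, .inr p' =>
    simp only [List.cons.injEq, and_true] at hinv
    refine congrArg _ (Subtype.ext (Prod.ext ?_ ?_))
    · exact Finset.val_injective hinv.1
    · exact Finset.val_injective hinv.2

lemma toQ_surjective (k : ℕ) : Function.Surjective (toQ n k) := by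
  intro q
  obtain ⟨⟨w, hnd, hlen⟩, rfl⟩ := Quotient.exists_rep q
  by_cases h0 : (0 : Fin n) ∈ w
  · -- one zero: invariant has two blocks
    have hc : w.count 0 = 1 := List.count_eq_one_of_mem hnd h0
    have hl : (inv w).length = 2 := by rw [inv_length, hc]
    obtain ⟨m₀, m₁, hw⟩ := List.length_eq_two.1 hl
    have hsum : m₀ + m₁ = (↑(w.filter (fun x => x ≠ 0)) : Multiset (Fin n)) := by
      have := inv_sum w; rw [hw] at this; simpa using this
    have hndf : (w.filter (fun x => x ≠ 0)).Nodup := hnd.filter _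
    have hnodup : Multiset.Nodup (m₀ + m₁) := by rw [hsum]; exact hndf
    rw [Multiset.nodup_add] at hnodup
    have h0m₀ : (0 : Fin n) ∉ m₀ := zero_not_mem_inv w m₀ (by rw [hw]; simp)
    have h0m₁ : (0 : Fin n) ∉ m₁ := zero_not_mem_inv w m₁ (by rw [hw]; simp)
    set A : Finset (Fin n) := ⟨m₀, hnodup.1⟩
    set B : Finset (Fin n) := ⟨m₁, hnodup.2.1⟩
    have hdisj : Disjoint A B := by
      rw [Finset.disjoint_left]
      exact fun a ha hb => Multiset.disjoint_left.1 hnodup.2.2 ha hb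
    have hcard : A.card + B.card + 1 = k := by
      have h1 : Multiset.card (m₀ + m₁) = (w.filter (fun x => x ≠ 0)).length := by
        rw [hsum, Multiset.coe_card]
      have h2 := length_filter_zero w
      simp only [Multiset.card_add] at h1
      have : A.card = Multiset.card m₀ := rfl
      have : B.card = Multiset.card m₁ := rfl
      rw [hc, hlen] at h2
      show Multiset.card m₀ + Multiset.card m₁ + 1 = k
      omega
    refine ⟨Sum.inr ⟨(A, B), h0m₀, h0m₁, hdisj, hcard⟩, ?_⟩
    apply Quotient.sound
    show Relation.EqvGen (CommStep (starG n)) _ w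
    apply eqv_of_inv_eq
    exact (inv_wordOf (Sum.inr ⟨(A, B), h0m₀, h0m₁, hdisj, hcard⟩ : Tk n k)).trans hw.symm
  · -- no zero: single block
    have hc : w.count 0 = 0 := List.count_eq_zero_of_not_mem h0
    have hl : (inv w).length = 1 := by rw [inv_length, hc]
    obtain ⟨m, hw⟩ := List.length_eq_one_iff.1 hl
    have hsum : m = (↑(w.filter (fun x => x ≠ 0)) : Multiset (Fin n)) := by
      have := inv_sum w; rw [hw] at this; simpa using this
    have hfeq : w.filter (fun x => x ≠ 0) = w :=
      List.filter_eq_self.2 (fun a ha => by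
        simp only [decide_eq_true_eq]; rintro rfl; exact h0 ha)
    have hnodup : Multiset.Nodup m := by rw [hsum, hfeq]; exact hnd
    have h0m : (0 : Fin n) ∉ m := zero_not_mem_inv w m (by rw [hw]; simp)
    set s : Finset (Fin n) := ⟨m, hnodup⟩
    have hcard : s.card = k := by
      show Multiset.card m = k
      rw [hsum, hfeq, Multiset.coe_card, hlen]
    refine ⟨Sum.inl ⟨s, h0m, hcard⟩, ?_⟩
    apply Quotient.sound
    show Relation.EqvGen (CommStep (starG n)) _ w
    apply eqv_of_inv_eq
    exact (inv_wordOf (Sum.inl ⟨s, h0m, hcard⟩ : Tk n k)).trans hw.symm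

lemma card_QT (k : ℕ) : Nat.card (QT n k) = Nat.card (Tk n k) :=
  Nat.card_congr (Equiv.ofBijective _ ⟨toQ_injective k, toQ_surjective k⟩).symm


lemma card_inl (k : ℕ) :
    Nat.card {s : Finset (Fin n) // (0 : Fin n) ∉ s ∧ s.card = k} = (n - 1).choose k := by
  rw [Nat.card_eq_fintype_card, Fintype.card_subtype]
  have h : (Finset.univ.filter fun s : Finset (Fin n) => (0 : Fin n) ∉ s ∧ s.card = k)
      = Finset.powersetCard k ((Finset.univ : Finset (Fin n)).erase 0) := by
    ext s
    simp only [Finset.mem_filter, Finset.mem_univ, true_and, Finset.mem_powersetCard,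
      Finset.subset_erase, Finset.subset_univ]
  rw [h, Finset.card_powersetCard, Finset.card_erase_of_mem (Finset.mem_univ _),
    Finset.card_univ, Fintype.card_fin]

def pairEquiv (j : ℕ) :
    {p : Finset (Fin n) × Finset (Fin n) //
      (0 : Fin n) ∉ p.1 ∧ (0 : Fin n) ∉ p.2 ∧ Disjoint p.1 p.2 ∧ p.1.card + p.2.card = j} ≃
    ((Finset.powersetCard j ((Finset.univ : Finset (Fin n)).erase 0)).sigma
      (fun C => C.powerset)) where
  toFun p := ⟨⟨p.1.1 ∪ p.1.2, p.1.1⟩, by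
    obtain ⟨h1, h2, h3, h4⟩ := p.2
    rw [Finset.mem_sigma, Finset.mem_powersetCard, Finset.mem_powerset]
    refine ⟨⟨?_, ?_⟩, Finset.subset_union_left⟩
    · rw [Finset.subset_erase]
      exact ⟨Finset.subset_univ _, by simp [h1, h2]⟩
    · rw [Finset.card_union_of_disjoint h3]; exact h4⟩
  invFun x := ⟨(x.1.2, x.1.1 \ x.1.2), by
    have hx := x.2
    rw [Finset.mem_sigma, Finset.mem_powersetCard, Finset.mem_powerset] at hx
    obtain ⟨⟨hsub, hcard⟩, hA⟩ := hx
    have h0C : (0 : Fin n) ∉ x.1.1 := (Finset.subset_erase.1 hsub).2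
    refine ⟨fun h => h0C (hA h), fun h => h0C (Finset.sdiff_subset h),
      Finset.disjoint_sdiff, ?_⟩
    show x.1.2.card + (x.1.1 \ x.1.2).card = j
    rw [Finset.card_sdiff_of_subset hA]
    have := Finset.card_le_card hA
    omega⟩
  left_inv p := by
    obtain ⟨⟨A, B⟩, h1, h2, h3, h4⟩ := p
    exact Subtype.ext (Prod.ext rfl (Finset.union_sdiff_cancel_left h3))
  right_inv x := by
    obtain ⟨⟨C, A⟩, hx⟩ := x
    rw [Finset.mem_sigma, Finset.mem_powersetCard, Finset.mem_powerset] at hx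
    refine Subtype.ext ?_
    have h : A ∪ C \ A = C := Finset.union_sdiff_of_subset hx.2
    simp [h]

lemma card_inr (j : ℕ) :
    Nat.card {p : Finset (Fin n) × Finset (Fin n) //
      (0 : Fin n) ∉ p.1 ∧ (0 : Fin n) ∉ p.2 ∧ Disjoint p.1 p.2 ∧ p.1.card + p.2.card = j}
      = (n - 1).choose j * 2 ^ j := by
  rw [Nat.card_congr (pairEquiv j), Nat.card_eq_finsetCard, Finset.card_sigma]
  have h : ∀ C ∈ Finset.powersetCard j ((Finset.univ : Finset (Fin n)).erase 0),
      C.powerset.card = 2 ^ j := fun C hC => by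
    rw [Finset.card_powerset, (Finset.mem_powersetCard.1 hC).2]
  rw [Finset.sum_congr rfl h, Finset.sum_const, Finset.card_powersetCard,
    Finset.card_erase_of_mem (Finset.mem_univ _), Finset.card_univ, Fintype.card_fin,
    smul_eq_mul]

lemma bWords_star (k : ℕ) : bWords (starG n) k =
    (n - 1).choose k + (if k = 0 then 0 else (n - 1).choose (k - 1) * 2 ^ (k - 1)) := by
  have h1 : bWords (starG n) k = Nat.card (Tk n k) := card_QT k
  rw [h1, Tk, Nat.card_sum, card_inl]
  congr 1
  cases k with
  | zero =>
    simp only [if_pos rfl]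
    have : IsEmpty {p : Finset (Fin n) × Finset (Fin n) //
        (0 : Fin n) ∉ p.1 ∧ (0 : Fin n) ∉ p.2 ∧ Disjoint p.1 p.2 ∧
          p.1.card + p.2.card + 1 = 0} := ⟨by rintro ⟨p, _, _, _, h⟩; omega⟩
    exact Nat.card_of_isEmpty
  | succ j =>
    have e : {p : Finset (Fin n) × Finset (Fin n) //
        (0 : Fin n) ∉ p.1 ∧ (0 : Fin n) ∉ p.2 ∧ Disjoint p.1 p.2 ∧
          p.1.card + p.2.card + 1 = j + 1} ≃
        {p : Finset (Fin n) × Finset (Fin n) //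
        (0 : Fin n) ∉ p.1 ∧ (0 : Fin n) ∉ p.2 ∧ Disjoint p.1 p.2 ∧
          p.1.card + p.2.card = j} :=
      Equiv.subtypeEquivRight (fun p => by constructor <;> (rintro ⟨a, b, c, d⟩; exact ⟨a, b, c, by omega⟩))
    rw [Nat.card_congr e, card_inr]
    simp

end StarBool

/-- **Boolean number of a star.**  For every `n ≥ 2`, the star graph `S_n` satisfies
`β(S_n) = 1`. -/
theorem booleanNumber_starGraph (n : ℕ) (hn : 2 ≤ n) :
    booleanNumber (starG n) = 1 := by
  haveI : NeZero n := ⟨by omega⟩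
  rw [booleanNumber, Fintype.card_fin]
  have hb : ∀ k, ((bWords (starG n) k : ℤ)) =
      ((n - 1).choose k : ℤ) +
        (if k = 0 then 0 else ((n - 1).choose (k - 1) : ℤ) * 2 ^ (k - 1)) := by
    intro k
    rw [StarBool.bWords_star]
    split_ifs with h <;> push_cast <;> ring
  have hsplit : ∑ k ∈ Finset.range (n + 1), (-1 : ℤ) ^ k * (bWords (starG n) k : ℤ) =
      (∑ k ∈ Finset.range (n + 1), (-1 : ℤ) ^ k * ((n - 1).choose k : ℤ)) +
      ∑ k ∈ Finset.range (n + 1), (-1 : ℤ) ^ k *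
        (if k = 0 then 0 else ((n - 1).choose (k - 1) : ℤ) * 2 ^ (k - 1)) := by
    rw [← Finset.sum_add_distrib]
    refine Finset.sum_congr rfl fun k _ => by rw [hb k]; ring
  have h1 : ∑ k ∈ Finset.range (n + 1), (-1 : ℤ) ^ k * ((n - 1).choose k : ℤ) = 0 := by
    rw [Finset.sum_range_succ]
    have hz : (n - 1).choose n = 0 := Nat.choose_eq_zero_of_lt (by omega)
    have hrange : n = (n - 1) + 1 := by omega
    rw [hz]
    rw [show Finset.range n = Finset.range ((n - 1) + 1) from by rw [← hrange]]
    rw [Int.alternating_sum_range_choose]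
    simp [show n - 1 ≠ 0 by omega]
  have h2 : ∑ k ∈ Finset.range (n + 1), (-1 : ℤ) ^ k *
      (if k = 0 then 0 else ((n - 1).choose (k - 1) : ℤ) * 2 ^ (k - 1)) = (-1 : ℤ) ^ n := by
    rw [Finset.sum_range_succ']
    simp only [Nat.succ_ne_zero, if_false, Nat.add_sub_cancel, pow_zero, one_mul, reduceIte,
      if_true, mul_zero, add_zero]
    have hstep : ∀ k, (-1 : ℤ) ^ (k + 1) * (((n - 1).choose k : ℤ) * 2 ^ k) =
        -(((-2 : ℤ) ^ k) * 1 ^ (n - 1 - k) * ((n - 1).choose k : ℤ)) := by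
      intro k
      rw [pow_succ]
      rw [show ((-2 : ℤ)) ^ k = (-1) ^ k * 2 ^ k from by rw [← neg_one_mul, mul_pow]]
      ring
    rw [Finset.sum_congr rfl fun k _ => hstep k, Finset.sum_neg_distrib]
    rw [show Finset.range n = Finset.range ((n - 1) + 1) from by congr 1; omega]
    rw [← add_pow (-2 : ℤ) 1 (n - 1)]
    have : ((-2 : ℤ) + 1) = -1 := by ring
    rw [this]
    have hpow : ((-1 : ℤ)) ^ n = (-1) ^ (n - 1) * (-1) := by
      rw [← pow_succ]; congr 1; omega
    rw [hpow]; ring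
  rw [hsplit, h1, h2, zero_add, ← pow_add]
  exact Even.neg_one_pow ⟨n, by ring⟩
end

section
/- Let K_n denote the complete graph on n vertices. Then β(K_1) = 0, β(K_2) = 1, and for all n ≥ 3, β(K_n) = (n−1) · ( β(K_{n−1}) + β(K_{n−2}) ). -/
lemma commStep_top_eq {V : Type*} {w w' : List V} (h : CommStep (⊤ : SimpleGraph V) w w') :
    w = w' := by
  obtain ⟨a, b, u, v, hadj, hw, hw'⟩ := h
  have : a = b := by simpa using hadj
  subst this; rw [hw, hw']

lemma eqvGen_top_eq {V : Type*} {w w' : List V}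
    (h : Relation.EqvGen (CommStep (⊤ : SimpleGraph V)) w w') : w = w' := by
  induction h with
  | rel _ _ h => exact commStep_top_eq h
  | refl => rfl
  | symm _ _ _ ih => exact ih.symm
  | trans _ _ _ _ _ ih1 ih2 => exact ih1.trans ih2

/-- Nodup lists of length `k` are equivalent to embeddings `Fin k ↪ V`. -/
noncomputable def nodupListEquivEmbedding (V : Type*) (k : ℕ) :
    {w : List V // w.Nodup ∧ w.length = k} ≃ (Fin k ↪ V) where
  toFun w := ⟨fun i => w.1.get (Fin.cast w.2.2.symm i), fun i j hij => by
    have := List.nodup_iff_injective_get.1 w.2.1 hij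
    simpa [Fin.ext_iff] using this⟩
  invFun e := ⟨List.ofFn e, List.nodup_ofFn.2 e.injective, List.length_ofFn (f := e)⟩
  left_inv w := by
    ext1
    obtain ⟨l, hnd, hl⟩ := w
    subst hl
    simp [Fin.cast_refl, List.ofFn_get]
  right_inv e := by
    ext i
    simp [List.get_ofFn]

lemma bWords_top (n k : ℕ) :
    bWords (⊤ : SimpleGraph (Fin n)) k = Nat.descFactorial n k := by
  unfold bWords
  have hq : ∀ w w' : {w : List (Fin n) // w.Nodup ∧ w.length = k},
      (Setoid.comap (fun w : {w : List (Fin n) // w.Nodup ∧ w.length = k} => w.1)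
        (commSetoid (⊤ : SimpleGraph (Fin n)))).r w w' ↔ w = w' := by
    intro w w'
    constructor
    · intro h
      exact Subtype.ext (eqvGen_top_eq h)
    · rintro rfl
      exact Relation.EqvGen.refl _
  have e : Quotient (Setoid.comap (fun w : {w : List (Fin n) // w.Nodup ∧ w.length = k} => w.1)
      (commSetoid (⊤ : SimpleGraph (Fin n)))) ≃ {w : List (Fin n) // w.Nodup ∧ w.length = k} := by
    refine Equiv.ofBijective (Quotient.lift id ?_) ⟨?_, ?_⟩
    · intro a b h; exact (hq a b).1 h
    · intro a b h
      induction a using Quotient.ind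
      induction b using Quotient.ind
      exact Quotient.sound ((hq _ _).2 h)
    · intro a; exact ⟨Quotient.mk _ a, rfl⟩
  rw [Nat.card_congr (e.trans (nodupListEquivEmbedding (Fin n) k)), Nat.card_eq_fintype_card,
    Fintype.card_embedding_eq, Fintype.card_fin, Fintype.card_fin]

lemma booleanNumber_top (n : ℕ) :
    booleanNumber (⊤ : SimpleGraph (Fin n)) = numDerangements n := by
  rw [numDerangements_sum]
  unfold booleanNumber
  rw [Fintype.card_fin]
  rw [← Finset.sum_range_reflect]
  rw [Finset.mul_sum]
  refine Finset.sum_congr rfl fun k hk => ?_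
  have hkn : k ≤ n := Finset.mem_range_succ_iff.1 hk
  rw [bWords_top]
  have h1 : n + 1 - 1 - k = n - k := by omega
  rw [h1]
  have h2 : n.descFactorial (n - k) = (k + 1).ascFactorial (n - k) := by
    have h := Nat.add_descFactorial_eq_ascFactorial k (n - k)
    rwa [show k + (n - k) = n by omega] at h
  rw [h2]
  have h3 : ((-1 : ℤ)) ^ n * (-1) ^ (n - k) = (-1) ^ k := by
    rw [← pow_add]
    have : n + (n - k) = 2 * (n - k) + k := by omega
    rw [this, pow_add, pow_mul]
    simp
  rw [← mul_assoc, h3]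

/-- **Boolean numbers of complete graphs.**  `β(K_1) = 0`, `β(K_2) = 1`, and for all
`n ≥ 3`, `β(K_n) = (n-1)(β(K_{n-1}) + β(K_{n-2}))`. -/
theorem booleanNumber_completeGraph_recursion :
    booleanNumber (⊤ : SimpleGraph (Fin 1)) = 0 ∧
    booleanNumber (⊤ : SimpleGraph (Fin 2)) = 1 ∧
    ∀ n : ℕ, 3 ≤ n →
      booleanNumber (⊤ : SimpleGraph (Fin n)) =
        ((n : ℤ) - 1) *
          (booleanNumber (⊤ : SimpleGraph (Fin (n - 1))) +
            booleanNumber (⊤ : SimpleGraph (Fin (n - 2)))) := by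
  refine ⟨by rw [booleanNumber_top]; rfl, by rw [booleanNumber_top]; rfl, fun n hn => ?_⟩
  obtain ⟨m, rfl⟩ : ∃ m, n = m + 2 := ⟨n - 2, by omega⟩
  rw [booleanNumber_top, booleanNumber_top, booleanNumber_top]
  have h1 : m + 2 - 1 = m + 1 := rfl
  have h2 : m + 2 - 2 = m := rfl
  rw [h1, h2, numDerangements_add_two]
  push_cast
  ring
end

section
/- Let T be a nonempty finite tree with edge set E. Then β(T) equals the number of subsets B ⊆ E such that every vertex of T is incident to some edge in B (equivalently, the number of spanning forests of T). -/
set_option linter.unusedSectionVars false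
set_option linter.unusedVariables false
set_option maxHeartbeats 1000000

open Finset List

section Dev
variable {V : Type*} [Fintype V] [DecidableEq V] {T : SimpleGraph V} [DecidableRel T.Adj]

noncomputable def vIdx : V → ℕ := fun v => ((Fintype.equivFin V) v : ℕ)

lemma vIdx_inj {a b : V} (h : vIdx a = vIdx b) : a = b :=
  (Fintype.equivFin V).injective (Fin.ext h)

def inv2 (T : SimpleGraph V) [DecidableRel T.Adj] (w : List V) : V → V → Bool :=
  fun a b => decide (T.Adj a b ∧ a ∈ w ∧ b ∈ w ∧ w.idxOf a < w.idxOf b)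

lemma nodup_facts {u v : List V} {x y : V} (hnd : (u ++ x :: y :: v).Nodup) :
    x ∉ u ∧ y ∉ u ∧ x ∉ v ∧ y ∉ v ∧ x ≠ y ∧ (∀ a ∈ u, a ∉ v) := by
  simp [List.nodup_append, List.disjoint_left] at hnd
  obtain ⟨h1, h2, h3⟩ := hnd
  exact ⟨fun h => (h3 _ h).1 rfl, fun h => (h3 _ h).2.1 rfl, h2.1.2, h2.2.1, h2.1.1,
    fun a ha hav => (h3 _ ha).2.2 _ hav rfl⟩

/-- simultaneous zone decomposition of `idxOf` in `u ++ x :: y :: v` and `u ++ y :: x :: v`. -/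
lemma idx_zones {u v : List V} {x y z : V} (hnd : (u ++ x :: y :: v).Nodup)
    (hz : z ∈ u ++ x :: y :: v) :
    (z ∈ u ∧ (u ++ x :: y :: v).idxOf z = u.idxOf z
        ∧ (u ++ y :: x :: v).idxOf z = u.idxOf z ∧ u.idxOf z < u.length) ∨
    (z = x ∧ (u ++ x :: y :: v).idxOf z = u.length
        ∧ (u ++ y :: x :: v).idxOf z = u.length + 1) ∨
    (z = y ∧ (u ++ x :: y :: v).idxOf z = u.length + 1
        ∧ (u ++ y :: x :: v).idxOf z = u.length) ∨
    (z ∈ v ∧ (u ++ x :: y :: v).idxOf z = u.length + 2 + v.idxOf z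
        ∧ (u ++ y :: x :: v).idxOf z = u.length + 2 + v.idxOf z) := by
  obtain ⟨hxu, hyu, hxv, hyv, hxy, hdisj⟩ := nodup_facts hnd
  by_cases hzu : z ∈ u
  · exact Or.inl ⟨hzu, List.idxOf_append_of_mem hzu, List.idxOf_append_of_mem hzu,
      List.idxOf_lt_length_iff.2 hzu⟩
  · rw [List.idxOf_append_of_notMem hzu, List.idxOf_append_of_notMem hzu]
    by_cases hzx : z = x
    · subst hzx; right; left
      rw [List.idxOf_cons_self, List.idxOf_cons_ne _ hxy.symm, List.idxOf_cons_self]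
      exact ⟨rfl, by omega, by omega⟩
    · by_cases hzy : z = y
      · subst hzy; right; right; left
        rw [List.idxOf_cons_ne _ (Ne.symm hzx), List.idxOf_cons_self,
          List.idxOf_cons_self]
        exact ⟨rfl, by omega, by omega⟩
      · have hzv : z ∈ v := by simp at hz; tauto
        right; right; right
        rw [List.idxOf_cons_ne _ (Ne.symm hzx), List.idxOf_cons_ne _ (Ne.symm hzy),
          List.idxOf_cons_ne _ (Ne.symm hzy), List.idxOf_cons_ne _ (Ne.symm hzx)]
        exact ⟨hzv, by omega, by omega⟩

/-- swapping two consecutive letters preserves the relative order of every other pair. -/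
lemma idx_swap_iff {u v : List V} {x y a b : V} (hnd : (u ++ x :: y :: v).Nodup)
    (ha : a ∈ u ++ x :: y :: v) (hb : b ∈ u ++ x :: y :: v)
    (hne1 : ¬(a = x ∧ b = y)) (hne2 : ¬(a = y ∧ b = x)) :
    ((u ++ x :: y :: v).idxOf a < (u ++ x :: y :: v).idxOf b ↔
      (u ++ y :: x :: v).idxOf a < (u ++ y :: x :: v).idxOf b) := by
  obtain ⟨hxu, hyu, hxv, hyv, hxy, hdisj⟩ := nodup_facts hnd
  rcases idx_zones hnd ha with ⟨h1, h2, h3, h4⟩ | ⟨h1, h2, h3⟩ | ⟨h1, h2, h3⟩ | ⟨h1, h2, h3⟩ <;>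
    rcases idx_zones hnd hb with ⟨g1, g2, g3, g4⟩ | ⟨g1, g2, g3⟩ | ⟨g1, g2, g3⟩ | ⟨g1, g2, g3⟩ <;>
    first
      | omega
      | exact absurd (And.intro h1 g1) hne1
      | exact absurd (And.intro h1 g1) hne2


lemma commStep_perm {w w' : List V} (h : CommStep T w w') : w.Perm w' := by
  obtain ⟨x, y, u, v, hxy, rfl, rfl⟩ := h
  exact List.Perm.append_left u (List.Perm.swap y x v)

lemma eqvGen_perm {w w' : List V} (h : Relation.EqvGen (CommStep T) w w') : w.Perm w' := by
  induction h with
  | rel _ _ h => exact commStep_perm h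
  | refl _ => exact List.Perm.refl _
  | symm _ _ _ ih => exact ih.symm
  | trans _ _ _ _ _ ih1 ih2 => exact ih1.trans ih2

lemma perm_toFinset {w w' : List V} (h : w.Perm w') : w.toFinset = w'.toFinset := by
  ext z; simp [List.mem_toFinset, h.mem_iff]

lemma inv2_commStep {w w' : List V} (h : CommStep T w w') (hnd : w.Nodup) :
    inv2 T w = inv2 T w' := by
  obtain ⟨x, y, u, v, hxy, rfl, rfl⟩ := h
  funext a b
  simp only [inv2]
  rw [decide_eq_decide]
  have hmem : ∀ z : V, z ∈ u ++ x :: y :: v ↔ z ∈ u ++ y :: x :: v := by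
    intro z; simp; tauto
  constructor
  · rintro ⟨hadj, ha, hb, hlt⟩
    have hne1 : ¬(a = x ∧ b = y) := by rintro ⟨rfl, rfl⟩; exact hxy hadj
    have hne2 : ¬(a = y ∧ b = x) := by rintro ⟨rfl, rfl⟩; exact hxy hadj.symm
    exact ⟨hadj, (hmem a).1 ha, (hmem b).1 hb, (idx_swap_iff hnd ha hb hne1 hne2).1 hlt⟩
  · rintro ⟨hadj, ha, hb, hlt⟩
    have ha' := (hmem a).2 ha
    have hb' := (hmem b).2 hb
    have hne1 : ¬(a = x ∧ b = y) := by rintro ⟨rfl, rfl⟩; exact hxy hadj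
    have hne2 : ¬(a = y ∧ b = x) := by rintro ⟨rfl, rfl⟩; exact hxy hadj.symm
    exact ⟨hadj, ha', hb', (idx_swap_iff hnd ha' hb' hne1 hne2).2 hlt⟩

lemma inv2_eqvGen {w w' : List V} (h : Relation.EqvGen (CommStep T) w w') :
    w.Nodup → inv2 T w = inv2 T w' := by
  induction h with
  | rel _ _ h => exact fun hnd => inv2_commStep h hnd
  | refl _ => exact fun _ => rfl
  | symm x y h ih => exact fun hnd => (ih (((eqvGen_perm h).nodup_iff).2 hnd)).symm
  | trans x y z h1 h2 ih1 ih2 =>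
      exact fun hnd => (ih1 hnd).trans (ih2 (((eqvGen_perm h1).nodup_iff).1 hnd))

lemma eqvGen_cons (x : V) {w w' : List V} (h : Relation.EqvGen (CommStep T) w w') :
    Relation.EqvGen (CommStep T) (x :: w) (x :: w') := by
  induction h with
  | rel a b h => ?_
  | refl a => exact .refl _
  | symm _ _ _ ih => exact .symm _ _ ih
  | trans _ _ _ _ _ ih1 ih2 => exact .trans _ _ _ ih1 ih2
  obtain ⟨p, q, u, v, hpq, rfl, rfl⟩ := h
  exact Relation.EqvGen.rel _ _ ⟨p, q, x :: u, v, hpq, rfl, rfl⟩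

lemma eqvGen_bubble {a : V} (t : List V) : ∀ s : List V, (∀ z ∈ s, ¬ T.Adj z a) →
    Relation.EqvGen (CommStep T) (s ++ a :: t) (a :: (s ++ t))
  | [], _ => Relation.EqvGen.refl _
  | z :: s, h => by
    have ih := eqvGen_bubble t s (fun z hz => h z (List.mem_cons_of_mem _ hz))
    refine Relation.EqvGen.trans _ _ _ (eqvGen_cons z ih) ?_
    exact Relation.EqvGen.rel _ _ ⟨z, a, [], s ++ t, h z (List.mem_cons_self), rfl, rfl⟩

lemma inv2_cons_ne {x a b : V} (l : List V) (hax : a ≠ x) (hbx : b ≠ x) :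
    inv2 T (x :: l) a b = inv2 T l a b := by
  simp only [inv2]
  rw [decide_eq_decide, List.idxOf_cons_ne _ (Ne.symm hax), List.idxOf_cons_ne _ (Ne.symm hbx)]
  constructor
  · rintro ⟨h1, h2, h3, h4⟩
    rcases List.mem_cons.1 h2 with h | h
    · exact absurd h hax
    rcases List.mem_cons.1 h3 with h' | h'
    · exact absurd h' hbx
    exact ⟨h1, h, h', by omega⟩
  · rintro ⟨h1, h2, h3, h4⟩
    exact ⟨h1, List.mem_cons_of_mem _ h2, List.mem_cons_of_mem _ h3, by omega⟩

lemma inv2_tail {x : V} {l l' : List V} (hx : x ∉ l) (hx' : x ∉ l')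
    (h : inv2 T (x :: l) = inv2 T (x :: l')) : inv2 T l = inv2 T l' := by
  funext a b
  rcases eq_or_ne a x with rfl | hax
  · simp [inv2, hx, hx']
  rcases eq_or_ne b x with rfl | hbx
  · simp [inv2, hx, hx']
  rw [← inv2_cons_ne l hax hbx, ← inv2_cons_ne l' hax hbx, h]

lemma inv2_complete : ∀ (w w' : List V), w.Nodup → w'.Nodup → w.toFinset = w'.toFinset →
    inv2 T w = inv2 T w' → Relation.EqvGen (CommStep T) w w'
  | [], w', _, _, hfs, _ => by
    have : w' = [] := by
      have := hfs.symm
      simpa [List.toFinset_eq_empty_iff] using this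
    subst this; exact Relation.EqvGen.refl _
  | a :: t, w', hnd, hnd', hfs, hinv => by
    have ha' : a ∈ w' := by
      rw [← List.mem_toFinset, ← hfs]; simp
    obtain ⟨s, t', rfl⟩ := List.append_of_mem ha'
    have hperm1 : (s ++ a :: t').Perm (a :: (s ++ t')) := List.perm_middle
    have hnd2 : (a :: (s ++ t')).Nodup := hperm1.nodup hnd'
    have hast : a ∉ s ++ t' := (List.nodup_cons.1 hnd2).1
    have hat : a ∉ t := (List.nodup_cons.1 hnd).1
    have hbub : ∀ z ∈ s, ¬ T.Adj z a := by
      intro z hz hadj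
      have hza : z ≠ a := fun h => hast (List.mem_append_left _ (h ▸ hz))
      have hzw : z ∈ a :: t := by
        rw [← List.mem_toFinset, hfs, List.mem_toFinset]
        exact List.mem_append_left _ hz
      have hzt : z ∈ t := by
        rcases List.mem_cons.1 hzw with h | h
        · exact absurd h hza
        · exact h
      have h1 : inv2 T (a :: t) a z = true := by
        simp only [inv2, decide_eq_true_iff]
        refine ⟨hadj.symm, List.mem_cons_self, hzw, ?_⟩
        rw [List.idxOf_cons_self, List.idxOf_cons_ne _ (Ne.symm hza)]
        omega
      rw [hinv] at h1
      simp only [inv2, decide_eq_true_iff] at h1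
      obtain ⟨-, -, -, hlt⟩ := h1
      rw [List.idxOf_append_of_notMem (fun h => hast (List.mem_append_left _ h)),
        List.idxOf_cons_self, List.idxOf_append_of_mem hz] at hlt
      have := List.idxOf_lt_length_iff.2 hz
      omega
    have h1 : Relation.EqvGen (CommStep T) (s ++ a :: t') (a :: (s ++ t')) :=
      eqvGen_bubble t' s hbub
    have hinv2 : inv2 T (a :: t) = inv2 T (a :: (s ++ t')) :=
      hinv.trans (inv2_eqvGen h1 hnd')
    have hfs2 : (a :: t).toFinset = (a :: (s ++ t')).toFinset :=
      hfs.trans (perm_toFinset hperm1)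
    have htfs : t.toFinset = (s ++ t').toFinset := by
      ext z
      rcases eq_or_ne z a with rfl | hza
      · simp only [List.mem_toFinset]
        constructor
        · exact fun h => absurd h hat
        · exact fun h => absurd h hast
      · have := Finset.ext_iff.1 hfs2 z
        simp only [List.toFinset_cons, Finset.mem_insert] at this
        simp only [List.mem_toFinset] at this ⊢
        tauto
    have hti : inv2 T t = inv2 T (s ++ t') := inv2_tail hat hast hinv2
    have ih := inv2_complete t (s ++ t') (List.nodup_cons.1 hnd).2 (List.nodup_cons.1 hnd2).2
      htfs hti
    exact Relation.EqvGen.trans _ _ _ (eqvGen_cons a ih) (Relation.EqvGen.symm _ _ h1)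


noncomputable def pathTo (hT : T.IsTree) (r v : V) : T.Walk r v :=
  (hT.existsUnique_path r v).choose

lemma pathTo_isPath (hT : T.IsTree) (r v : V) : (pathTo hT r v).IsPath :=
  (hT.existsUnique_path r v).choose_spec.1

lemma pathTo_unique (hT : T.IsTree) {r v : V} {q : T.Walk r v} (hq : q.IsPath) :
    q = pathTo hT r v :=
  (hT.existsUnique_path r v).choose_spec.2 q hq

def wt (F : V → V → Bool) (d : T.Dart) : ℤ := if F d.toProd.1 d.toProd.2 then 1 else -1

noncomputable def phi (hT : T.IsTree) (F : V → V → Bool) (r v : V) : ℤ :=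
  ((pathTo hT r v).darts.map (wt F)).sum

lemma phi_step (hT : T.IsTree) (F : V → V → Bool) (r : V) {a b : V} (hadj : T.Adj a b)
    (hsym : ∀ x y, T.Adj x y → F x y = !F y x) (hF : F a b = true) :
    phi hT F r b = phi hT F r a + 1 := by
  have hFba : F b a = false := by
    have := hsym a b hadj
    rw [hF] at this
    simpa using this.symm
  by_cases hb : b ∈ (pathTo hT r a).support
  · have hd := (pathTo_isPath hT r a).dropUntil hb
    have hsp : (SimpleGraph.Walk.cons hadj.symm SimpleGraph.Walk.nil : T.Walk b a).IsPath := by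
      simp [SimpleGraph.Walk.isPath_def, hadj.ne']
    have hsingle : (pathTo hT r a).dropUntil b hb = SimpleGraph.Walk.cons hadj.symm SimpleGraph.Walk.nil :=
      (hT.existsUnique_path b a).unique hd hsp
    have htake : pathTo hT r b = (pathTo hT r a).takeUntil b hb :=
      (pathTo_unique hT ((pathTo_isPath hT r a).takeUntil hb)).symm
    have hspec := (pathTo hT r a).take_spec hb
    have e1 : (pathTo hT r a).darts
        = (pathTo hT r b).darts ++ [⟨(b, a), hadj.symm⟩] := by
      conv_lhs => rw [← hspec]
      rw [SimpleGraph.Walk.darts_append, htake, hsingle]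
      simp
    unfold phi
    rw [e1, List.map_append, List.sum_append]
    simp [wt, hFba]
  · have hq : ((pathTo hT r a).concat hadj).IsPath := by
      rw [SimpleGraph.Walk.isPath_def, SimpleGraph.Walk.support_concat,
        List.nodup_append]
      exact ⟨(pathTo_isPath hT r a).2, List.nodup_singleton _,
        by intro z hz z' hz' hzz; simp at hz'; subst hz' hzz; exact hb hz⟩
    have : pathTo hT r b = (pathTo hT r a).concat hadj := (pathTo_unique hT hq).symm
    unfold phi
    rw [this, SimpleGraph.Walk.darts_concat, List.concat_eq_append, List.map_append,
      List.sum_append]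
    simp [wt, hF]

lemma sorted_rel_of_idxOf_lt {r : V → V → Prop} {l : List V} (hs : l.Pairwise r)
    {a b : V} (ha : a ∈ l) (hb : b ∈ l) (h : l.idxOf a < l.idxOf b) : r a b := by
  have ha' := List.idxOf_lt_length_iff.2 ha
  have hb' := List.idxOf_lt_length_iff.2 hb
  have := List.Pairwise.rel_get_of_lt hs (a := ⟨l.idxOf a, ha'⟩) (b := ⟨l.idxOf b, hb'⟩) h
  simpa [List.get_eq_getElem, List.getElem_idxOf] using this

lemma realize (hT : T.IsTree) [Nonempty V] {S : Finset V} {f : V → V → Bool}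
    (hf1 : ∀ a b, f a b = true → T.Adj a b ∧ a ∈ S ∧ b ∈ S)
    (hf2 : ∀ a b, T.Adj a b → a ∈ S → b ∈ S → f a b = !f b a) :
    ∃ w : List V, w.Nodup ∧ w.toFinset = S ∧ w.length = S.card ∧ inv2 T w = f := by
  classical
  set F : V → V → Bool := fun a b =>
    decide (T.Adj a b) && (if a ∈ S ∧ b ∈ S then f a b else decide (vIdx a < vIdx b)) with hFdef
  have hsym : ∀ x y, T.Adj x y → F x y = !F y x := by
    intro x y hadj
    have hne : vIdx x ≠ vIdx y := fun h => hadj.ne (vIdx_inj h)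
    by_cases hx : x ∈ S <;> by_cases hy : y ∈ S <;>
      simp only [hFdef, hx, hy, hadj, hadj.symm, decide_true, true_and, and_true,
        and_false, false_and, if_true, if_false, ite_true, ite_false, Bool.true_and]
    · exact hf2 x y hadj hx hy
    all_goals
      rcases lt_trichotomy (vIdx x) (vIdx y) with h | h | h
      · simp [h, not_lt.2 h.le]
      · exact absurd h hne
      · simp [h, not_lt.2 h.le]
  have hFf : ∀ a b, f a b = true → F a b = true := by
    intro a b h
    obtain ⟨hadj, ha, hb⟩ := hf1 a b h
    simp [hFdef, hadj, ha, hb, h]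
  obtain ⟨r⟩ := ‹Nonempty V›
  set φ : V → ℤ := phi hT F r with hφ
  set R : V → V → Prop := fun x y => φ x < φ y ∨ (φ x = φ y ∧ vIdx x ≤ vIdx y) with hR
  haveI : DecidableRel R := Classical.decRel _
  haveI : Std.Total R := ⟨by
    intro x y
    rcases lt_trichotomy (φ x) (φ y) with h | h | h
    · exact Or.inl (Or.inl h)
    · rcases le_total (vIdx x) (vIdx y) with h' | h'
      · exact Or.inl (Or.inr ⟨h, h'⟩)
      · exact Or.inr (Or.inr ⟨h.symm, h'⟩)
    · exact Or.inr (Or.inl h)⟩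
  haveI : IsTrans V R := ⟨by
    intro x y z h1 h2
    rcases h1 with h1 | ⟨h1, h1'⟩ <;> rcases h2 with h2 | ⟨h2, h2'⟩
    · exact Or.inl (h1.trans h2)
    · exact Or.inl (h2 ▸ h1)
    · exact Or.inl (h1 ▸ h2)
    · exact Or.inr ⟨h1.trans h2, h1'.trans h2'⟩⟩
  haveI : Std.Antisymm R := ⟨by
    intro x y h1 h2
    rcases h1 with h1 | ⟨h1, h1'⟩ <;> rcases h2 with h2 | ⟨h2, h2'⟩ <;>
      first | omega | exact vIdx_inj (le_antisymm h1' h2')⟩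
  refine ⟨S.sort R, S.sort_nodup R, S.sort_toFinset R, S.length_sort R, ?_⟩
  have hsorted : (S.sort R).Pairwise R := S.pairwise_sort R
  have hmemw : ∀ z, z ∈ S.sort R ↔ z ∈ S := fun z => Finset.mem_sort R
  funext a b
  cases hab : f a b with
  | false =>
    simp only [inv2, decide_eq_false_iff_not]
    rintro ⟨hadj, haw, hbw, hlt⟩
    have haS : a ∈ S := (hmemw a).1 haw
    have hbS : b ∈ S := (hmemw b).1 hbw
    have hba : f b a = true := by
      have := hf2 a b hadj haS hbS
      rw [hab] at this
      simpa using this.symm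
    have hphi : φ a = φ b + 1 := phi_step hT F r hadj.symm hsym (hFf b a hba)
    have hRab : R a b := sorted_rel_of_idxOf_lt hsorted haw hbw hlt
    rcases hRab with h | ⟨h, -⟩ <;> omega
  | true =>
    obtain ⟨hadj, haS, hbS⟩ := hf1 a b hab
    have hphi : φ b = φ a + 1 := phi_step hT F r hadj hsym (hFf a b hab)
    have haw : a ∈ S.sort R := (hmemw a).2 haS
    have hbw : b ∈ S.sort R := (hmemw b).2 hbS
    have hne : (S.sort R).idxOf a ≠ (S.sort R).idxOf b :=
      fun h => hadj.ne ((List.idxOf_inj haw).1 h)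
    have hlt : (S.sort R).idxOf a < (S.sort R).idxOf b := by
      rcases lt_or_gt_of_ne hne with h | h
      · exact h
      · have := sorted_rel_of_idxOf_lt hsorted hbw haw h
        rcases this with h' | ⟨h', -⟩ <;> omega
    simp only [inv2, decide_eq_true_iff]
    exact ⟨hadj, haw, hbw, hlt⟩


variable (T) in
def GoodF (k : ℕ) : Finset (Finset V × (V → V → Bool)) :=
  Finset.univ.filter (fun p =>
    p.1.card = k ∧
    (∀ a b, p.2 a b = true → T.Adj a b ∧ a ∈ p.1 ∧ b ∈ p.1) ∧
    (∀ a b, T.Adj a b → a ∈ p.1 → b ∈ p.1 → p.2 a b = !p.2 b a))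

variable (T) in
noncomputable def DS (S : Finset V) : Finset (V × V) :=
  Finset.univ.filter (fun p => T.Adj p.1 p.2 ∧ p.1 ∈ S ∧ p.2 ∈ S ∧ vIdx p.1 < vIdx p.2)

variable (T) in
def EW (S : Finset V) : Finset (Sym2 V) :=
  T.edgeFinset.filter (fun e => ∀ v ∈ e, v ∈ S)


lemma inv_mem_goodF {w : List V} (hnd : w.Nodup) {k : ℕ} (hlen : w.length = k) :
    (w.toFinset, inv2 T w) ∈ GoodF T k := by
  rw [GoodF, Finset.mem_filter]
  refine ⟨Finset.mem_univ _, by rw [List.toFinset_card_of_nodup hnd, hlen], ?_, ?_⟩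
  · intro a b h
    simp only [inv2, decide_eq_true_iff] at h
    exact ⟨h.1, List.mem_toFinset.2 h.2.1, List.mem_toFinset.2 h.2.2.1⟩
  · intro a b hadj ha hb
    have ha' := List.mem_toFinset.1 ha
    have hb' := List.mem_toFinset.1 hb
    have hne : w.idxOf a ≠ w.idxOf b :=
      fun h => hadj.ne ((List.idxOf_inj ha').1 h)
    by_cases h : w.idxOf a < w.idxOf b
    · have h2 : ¬ w.idxOf b < w.idxOf a := by omega
      simp [inv2, hadj, hadj.symm, ha', hb', h, h2]
    · have h2 : w.idxOf b < w.idxOf a := by omega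
      simp [inv2, hadj, hadj.symm, ha', hb', h, h2]

lemma bWords_eq_goodF (hT : T.IsTree) [Nonempty V] (k : ℕ) :
    bWords T k = (GoodF T k).card := by
  classical
  set s := Setoid.comap
    (fun w : {w : List V // w.Nodup ∧ w.length = k} => w.1) (commSetoid T) with hs
  have hrel : ∀ w w' : {w : List V // w.Nodup ∧ w.length = k},
      s.r w w' → Relation.EqvGen (CommStep T) w.1 w'.1 := fun _ _ h => h
  let F : Quotient s → {p // p ∈ GoodF T k} :=
    Quotient.lift (fun w : {w : List V // w.Nodup ∧ w.length = k} =>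
      (⟨(w.1.toFinset, inv2 T w.1), inv_mem_goodF w.2.1 w.2.2⟩ : {p // p ∈ GoodF T k}))
      (by
        intro w w' h
        have h' : Relation.EqvGen (CommStep T) w.1 w'.1 := h
        apply Subtype.ext
        exact Prod.ext (perm_toFinset (eqvGen_perm h')) (inv2_eqvGen h' w.2.1))
  have hbij : Function.Bijective F := by
    constructor
    · intro q1 q2
      refine Quotient.inductionOn₂ q1 q2 ?_
      intro w1 w2 h
      apply Quotient.sound
      have h' : (w1.1.toFinset, inv2 T w1.1) = (w2.1.toFinset, inv2 T w2.1) :=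
        Subtype.ext_iff.1 h
      rw [Prod.mk.injEq] at h'
      exact inv2_complete w1.1 w2.1 w1.2.1 w2.2.1 h'.1 h'.2
    · rintro ⟨⟨S, f⟩, hp⟩
      rw [GoodF, Finset.mem_filter] at hp
      obtain ⟨-, hcard, hf1, hf2⟩ := hp
      obtain ⟨w, hnd, hfs, hlen, hinv⟩ := realize hT hf1 hf2
      refine ⟨Quotient.mk s ⟨w, hnd, by rw [hlen, hcard]⟩, ?_⟩
      apply Subtype.ext
      exact Prod.ext hfs hinv
  rw [bWords, Nat.card_eq_of_bijective F hbij, Nat.card_eq_finsetCard]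

lemma fiber_card (S : Finset V) (k : ℕ) (hS : S.card = k) :
    ((GoodF T k).filter (fun p => p.1 = S)).card = 2 ^ (DS T S).card := by
  classical
  rw [← Finset.card_powerset]
  refine Finset.card_bij'
    (fun p _ => (DS T S).filter (fun q => p.2 q.1 q.2))
    (fun B _ => (S, fun a b => decide (T.Adj a b ∧ a ∈ S ∧ b ∈ S) &&
      (if vIdx a < vIdx b then decide ((a, b) ∈ B) else !decide ((b, a) ∈ B))))
    (fun p hp => Finset.mem_powerset.2 (Finset.filter_subset _ _)) ?_ ?_ ?_
  · -- j maps into the fiber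
    intro B hB
    rw [Finset.mem_powerset] at hB
    rw [Finset.mem_filter, GoodF, Finset.mem_filter]
    refine ⟨⟨Finset.mem_univ _, hS, ?_, ?_⟩, rfl⟩
    · intro a b h
      simp only [Bool.and_eq_true, decide_eq_true_iff] at h
      exact ⟨h.1.1, h.1.2.1, h.1.2.2⟩
    · intro a b hadj ha hb
      have hd1 : decide (T.Adj a b ∧ a ∈ S ∧ b ∈ S) = true := by
        simp [hadj, ha, hb]
      have hd2 : decide (T.Adj b a ∧ b ∈ S ∧ a ∈ S) = true := by
        simp [hadj.symm, ha, hb]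
      have hne : vIdx a ≠ vIdx b := fun h => hadj.ne (vIdx_inj h)
      rcases lt_trichotomy (vIdx a) (vIdx b) with h | h | h
      · have h' : ¬ vIdx b < vIdx a := by omega
        simp [hd1, hd2, h, h']
      · exact absurd h hne
      · have h' : ¬ vIdx a < vIdx b := by omega
        simp [hd1, hd2, h, h']
  · -- left inverse
    intro p hp
    rw [Finset.mem_filter, GoodF, Finset.mem_filter] at hp
    obtain ⟨⟨-, hcard, hf1, hf2⟩, hfst⟩ := hp
    obtain ⟨S', f⟩ := p
    simp only at hfst
    subst hfst
    simp only [Prod.mk.injEq, true_and]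
    funext a b
    by_cases hc : T.Adj a b ∧ a ∈ S' ∧ b ∈ S'
    · obtain ⟨hadj, ha, hb⟩ := hc
      have hd1 : decide (T.Adj a b ∧ a ∈ S' ∧ b ∈ S') = true := by simp [hadj, ha, hb]
      have hne : vIdx a ≠ vIdx b := fun h => hadj.ne (vIdx_inj h)
      rcases lt_trichotomy (vIdx a) (vIdx b) with h | h | h
      · have hmem : (a, b) ∈ DS T S' := by
          rw [DS, Finset.mem_filter]
          exact ⟨Finset.mem_univ _, hadj, ha, hb, h⟩
        simp only [hd1, h, if_true, Bool.true_and]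
        by_cases hf : f a b = true
        · simp [Finset.mem_filter, hmem, hf]
        · simp only [Bool.not_eq_true] at hf
          simp [Finset.mem_filter, hmem, hf]
      · exact absurd h hne
      · have hmem : (b, a) ∈ DS T S' := by
          rw [DS, Finset.mem_filter]
          exact ⟨Finset.mem_univ _, hadj.symm, hb, ha, h⟩
        have h' : ¬ vIdx a < vIdx b := by omega
        simp only [hd1, h', if_false, Bool.true_and]
        have hsymf : f a b = !f b a := hf2 a b hadj ha hb
        by_cases hf : f b a = true
        · simp [Finset.mem_filter, hmem, hf, hsymf]
        · simp only [Bool.not_eq_true] at hf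
          simp [Finset.mem_filter, hmem, hf, hsymf]
    · have hfab : f a b = false := by
        by_contra h
        simp only [Bool.not_eq_false] at h
        exact hc ⟨(hf1 a b h).1, (hf1 a b h).2.1, (hf1 a b h).2.2⟩
      have hd1 : decide (T.Adj a b ∧ a ∈ S' ∧ b ∈ S') = false := by
        simpa using hc
      simp [hd1, hfab]
  · -- right inverse
    intro B hB
    rw [Finset.mem_powerset] at hB
    ext q
    rw [Finset.mem_filter]
    constructor
    · rintro ⟨hq, hq2⟩
      rw [DS, Finset.mem_filter] at hq
      obtain ⟨-, hadj, h1, h2, hlt⟩ := hq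
      simp only [hadj, h1, h2, and_self, decide_true, hlt, if_true, Bool.true_and,
        decide_eq_true_iff] at hq2
      exact hq2
    · intro hq
      have hqDS : q ∈ DS T S := hB hq
      rw [DS, Finset.mem_filter] at hqDS
      obtain ⟨-, hadj, h1, h2, hlt⟩ := hqDS
      refine ⟨hB hq, ?_⟩
      simp [hadj, h1, h2, hlt, hq]

lemma goodF_card (k : ℕ) :
    (GoodF T k).card = ∑ S ∈ Finset.powersetCard k (Finset.univ : Finset V), 2 ^ (DS T S).card := by
  classical
  rw [Finset.card_eq_sum_card_fiberwise (f := Prod.fst)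
    (t := Finset.powersetCard k Finset.univ) (fun p hp => by
      rw [Finset.mem_coe, GoodF, Finset.mem_filter] at hp
      exact Finset.mem_coe.2 (Finset.mem_powersetCard_univ.2 hp.2.1))]
  refine Finset.sum_congr rfl fun S hS => ?_
  exact fiber_card S k (Finset.mem_powersetCard_univ.1 hS)

lemma DS_card_eq (S : Finset V) : (DS T S).card = (EW T S).card := by
  refine Finset.card_bij (fun p _ => (s(p.1, p.2) : Sym2 V)) ?_ ?_ ?_
  · intro p hp
    rw [DS, Finset.mem_filter] at hp
    obtain ⟨-, hadj, h1, h2, -⟩ := hp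
    rw [EW, Finset.mem_filter]
    refine ⟨SimpleGraph.mem_edgeFinset.2 hadj, ?_⟩
    intro v hv
    rcases Sym2.mem_iff.1 hv with rfl | rfl
    · exact h1
    · exact h2
  · intro p hp q hq h
    rw [DS, Finset.mem_filter] at hp hq
    rcases Sym2.eq_iff.1 h with ⟨h1, h2⟩ | ⟨h1, h2⟩
    · exact Prod.ext h1 h2
    · exfalso
      have hp' := hp.2.2.2.2
      have hq' := hq.2.2.2.2
      rw [h1, h2] at hp'
      omega
  · intro e he
    rw [EW, Finset.mem_filter] at he
    obtain ⟨he1, he2⟩ := he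
    induction e with
    | _ x y =>
      have hadj : T.Adj x y := SimpleGraph.mem_edgeFinset.1 he1
      have hx : x ∈ S := he2 x (Sym2.mem_mk_left x y)
      have hy : y ∈ S := he2 y (Sym2.mem_mk_right x y)
      have hne : vIdx x ≠ vIdx y := fun h => hadj.ne (vIdx_inj h)
      rcases lt_trichotomy (vIdx x) (vIdx y) with h | h | h
      · exact ⟨(x, y), by rw [DS, Finset.mem_filter]; exact ⟨Finset.mem_univ _, hadj, hx, hy, h⟩,
          rfl⟩
      · exact absurd h hne
      · exact ⟨(y, x), by rw [DS, Finset.mem_filter]; exact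
          ⟨Finset.mem_univ _, hadj.symm, hy, hx, h⟩, Sym2.eq_swap⟩


lemma bWords_cast (hT : T.IsTree) [Nonempty V] (k : ℕ) : (bWords T k : ℤ)
    = ∑ S ∈ Finset.powersetCard k (Finset.univ : Finset V), 2 ^ (EW T S).card := by
  rw [bWords_eq_goodF hT k, goodF_card]
  push_cast
  exact Finset.sum_congr rfl fun S _ => by rw [DS_card_eq]

lemma sum_superset_neg_one (U : Finset V) :
    ∑ S ∈ (Finset.univ : Finset V).powerset, (if U ⊆ S then ((-1 : ℤ)) ^ S.card else 0)
      = if U = Finset.univ then (-1) ^ (Fintype.card V) else 0 := by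
  classical
  rw [← Finset.sum_filter]
  have h1 : ∑ S ∈ (Finset.univ : Finset V).powerset.filter (fun S => U ⊆ S), ((-1 : ℤ)) ^ S.card
      = ∑ C ∈ ((Finset.univ : Finset V) \ U).powerset, ((-1 : ℤ)) ^ (U.card + C.card) := by
    refine Finset.sum_nbij' (i := fun S => S \ U) (j := fun C => U ∪ C) ?_ ?_ ?_ ?_ ?_
    · intro S hS
      rw [Finset.mem_filter, Finset.mem_powerset] at hS
      rw [Finset.mem_powerset]
      exact Finset.sdiff_subset_sdiff hS.1 (le_refl U)
    · intro C hC
      rw [Finset.mem_powerset] at hC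
      rw [Finset.mem_filter, Finset.mem_powerset]
      exact ⟨Finset.subset_univ _, Finset.subset_union_left⟩
    · intro S hS
      rw [Finset.mem_filter] at hS
      exact Finset.union_sdiff_of_subset hS.2
    · intro C hC
      rw [Finset.mem_powerset] at hC
      have hd : Disjoint U C := by
        refine Finset.disjoint_left.2 fun v hv hv' => ?_
        exact (Finset.mem_sdiff.1 (hC hv')).2 hv
      show (U ∪ C) \ U = C
      rw [Finset.union_sdiff_cancel_left hd]
    · intro S hS
      rw [Finset.mem_filter] at hS
      congr 1
      rw [Finset.card_sdiff_of_subset hS.2]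
      have := Finset.card_le_card hS.2
      omega
  rw [h1]
  simp_rw [pow_add]
  rw [← Finset.mul_sum, Finset.sum_powerset_neg_one_pow_card]
  by_cases hU : U = Finset.univ
  · subst hU
    simp
  · have hne : (Finset.univ : Finset V) \ U ≠ ∅ := by
      rw [Ne, Finset.sdiff_eq_empty_iff_subset]
      exact fun h => hU (Finset.univ_subset_iff.1 h)
    simp [hne, hU]


end Dev

/-- **The boolean number of a tree counts spanning forests.**  For a nonempty finite tree
`T`, `β(T)` equals the number of subsets `B` of the edge set such that every vertex of `T`
is incident to some edge of `B` (equivalently, the number of spanning forests of `T`). -/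
theorem booleanNumber_tree_eq_card_spanning_forests {V : Type*} [Fintype V] [DecidableEq V]
    [Nonempty V] (T : SimpleGraph V) [DecidableRel T.Adj] (hT : T.IsTree) :
    booleanNumber T =
      ((T.edgeFinset.powerset.filter (fun B => ∀ v : V, ∃ e ∈ B, v ∈ e)).card : ℤ) := by
  classical
  rw [booleanNumber]
  have e1 : ∑ k ∈ Finset.range (Fintype.card V + 1), (-1 : ℤ) ^ k * (bWords T k : ℤ)
      = ∑ S ∈ (Finset.univ : Finset V).powerset, (-1 : ℤ) ^ S.card * 2 ^ (EW T S).card := by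
    rw [Finset.powerset_card_disjiUnion, Finset.sum_disjiUnion _ _ (Finset.pairwise_disjoint_powersetCard _ |>.set_pairwise _), Finset.card_univ]
    refine Finset.sum_congr rfl fun k hk => ?_
    rw [bWords_cast hT k, Finset.mul_sum]
    refine Finset.sum_congr rfl fun S hS => ?_
    rw [Finset.mem_powersetCard_univ.1 hS]
  rw [e1]
  have e2 : ∀ S : Finset V, ((2 : ℤ)) ^ (EW T S).card
      = ∑ B ∈ T.edgeFinset.powerset, (if B ⊆ EW T S then (1 : ℤ) else 0) := by
    intro S
    rw [Finset.sum_boole]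
    have hfe : T.edgeFinset.powerset.filter (fun B => B ⊆ EW T S) = (EW T S).powerset := by
      ext B
      rw [Finset.mem_filter, Finset.mem_powerset, Finset.mem_powerset]
      constructor
      · exact fun h => h.2
      · exact fun h => ⟨h.trans (Finset.filter_subset _ _), h⟩
    rw [hfe, Finset.card_powerset]
    push_cast
    ring
  have e3 : ∑ S ∈ (Finset.univ : Finset V).powerset, (-1 : ℤ) ^ S.card * 2 ^ (EW T S).card
      = ∑ B ∈ T.edgeFinset.powerset, ∑ S ∈ (Finset.univ : Finset V).powerset,
          (if (Finset.univ.filter (fun v => ∃ e ∈ B, v ∈ e)) ⊆ S then (-1 : ℤ) ^ S.card else 0) := by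
    rw [← Finset.sum_comm]
    refine Finset.sum_congr rfl fun S hS => ?_
    rw [e2 S, Finset.mul_sum]
    refine Finset.sum_congr rfl fun B hB => ?_
    rw [Finset.mem_powerset] at hB
    have hcond : B ⊆ EW T S ↔ (Finset.univ.filter (fun v => ∃ e ∈ B, v ∈ e)) ⊆ S := by
      constructor
      · intro h v hv
        rw [Finset.mem_filter] at hv
        obtain ⟨-, e, heB, hve⟩ := hv
        have := h heB
        rw [EW, Finset.mem_filter] at this
        exact this.2 v hve
      · intro h e heB
        rw [EW, Finset.mem_filter]
        refine ⟨hB heB, fun v hv => h ?_⟩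
        rw [Finset.mem_filter]
        exact ⟨Finset.mem_univ _, e, heB, hv⟩
    by_cases h : B ⊆ EW T S
    · rw [if_pos h, if_pos (hcond.1 h), mul_one]
    · rw [if_neg h, if_neg (fun hc => h (hcond.2 hc)), mul_zero]
  rw [e3]
  have e4 : ∑ B ∈ T.edgeFinset.powerset, ∑ S ∈ (Finset.univ : Finset V).powerset,
        (if (Finset.univ.filter (fun v => ∃ e ∈ B, v ∈ e)) ⊆ S then (-1 : ℤ) ^ S.card else 0)
      = ∑ B ∈ T.edgeFinset.powerset,
        (if (∀ v : V, ∃ e ∈ B, v ∈ e) then ((-1 : ℤ)) ^ (Fintype.card V) else 0) := by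
    refine Finset.sum_congr rfl fun B hB => ?_
    rw [sum_superset_neg_one]
    congr 1
    rw [eq_iff_iff]
    constructor
    · intro h v
      have : v ∈ Finset.univ.filter (fun v => ∃ e ∈ B, v ∈ e) := by
        rw [h]; exact Finset.mem_univ _
      rw [Finset.mem_filter] at this
      exact this.2
    · intro h
      refine Finset.eq_univ_of_forall fun v => ?_
      rw [Finset.mem_filter]
      exact ⟨Finset.mem_univ _, h v⟩
  rw [e4, ← Finset.sum_filter, Finset.sum_const, nsmul_eq_mul]
  have hpow : ((-1 : ℤ)) ^ Fintype.card V * ((-1 : ℤ)) ^ Fintype.card V = 1 := by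
    rw [← mul_pow]; norm_num
  calc (-1 : ℤ) ^ Fintype.card V *
        (((T.edgeFinset.powerset.filter (fun B => ∀ v : V, ∃ e ∈ B, v ∈ e)).card : ℤ)
          * (-1) ^ Fintype.card V)
      = ((-1 : ℤ) ^ Fintype.card V * (-1) ^ Fintype.card V) *
        ((T.edgeFinset.powerset.filter (fun B => ∀ v : V, ∃ e ∈ B, v ∈ e)).card : ℤ) := by ring
    _ = _ := by rw [hpow, one_mul]
end
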